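/- arXiv:1712.08787 — 3 statements merged into one kernel-verified Lean document; each statement's English description precedes it below -/
import Mathlib

section
/- For all natural numbers h ≥ 1, r, i with i ≤ h-1 (interpreting q-binomials as 0 when the lower index exceeds the upper), the identity q^i · qbinom(h-1, i) · qbinom(h+r-i-1, h) + qbinom(h-1, i-1) · qbinom(h+r-i, h) = qbinom(r, i) · qbinom(h+r-i-1, h-i) holds as polynomials in q. -/
open Finset

/-- The `q`-analogue `[n]_q = 1 + q + ⋯ + q^(n-1)` as a rational function in `q`. -/
noncomputable def qInt (n : ℕ) : RatFunc ℚ := ∑ i ∈ Finset.range n, RatFunc.X ^ i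

/-- The `q`-factorial `[n]_q! = [n]_q [n-1]_q ⋯ [1]_q`. -/
noncomputable def qFact : ℕ → RatFunc ℚ
  | 0 => 1
  | n + 1 => qInt (n + 1) * qFact n

/-- The Gaussian binomial coefficient, defined as `[n]_q! / ([k]_q! [n-k]_q!)`,
with the convention that it vanishes when `n < k` (and when the lower index is negative). -/
noncomputable def qBinom (n k : ℕ) : RatFunc ℚ :=
  if k ≤ n then qFact n / (qFact k * qFact (n - k)) else 0

lemma qInt_geom (n : ℕ) : (RatFunc.X - 1) * qInt n = RatFunc.X ^ n - 1 := by
  induction n with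
  | zero => simp [qInt]
  | succ n ih =>
    rw [qInt, Finset.sum_range_succ, ← qInt] at *
    ring_nf; ring_nf at ih; linear_combination ih

lemma qInt_ne_zero {n : ℕ} (hn : 1 ≤ n) : qInt n ≠ 0 := by
  obtain ⟨m, rfl⟩ := Nat.exists_eq_add_of_le hn
  have : qInt (1 + m)
      = algebraMap (Polynomial ℚ) (RatFunc ℚ) (∑ i ∈ Finset.range (1 + m), Polynomial.X ^ i) := by
    rw [qInt, map_sum]; simp [RatFunc.algebraMap_X]
  rw [this]
  apply RatFunc.algebraMap_ne_zero
  intro h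
  have := congrArg (Polynomial.eval 0) h
  rw [add_comm] at this
  simp [Polynomial.eval_finset_sum, Finset.sum_range_succ'] at this

lemma qFact_ne_zero (n : ℕ) : qFact n ≠ 0 := by
  induction n with
  | zero => simp [qFact]
  | succ n ih => exact mul_ne_zero (qInt_ne_zero (Nat.succ_le_succ (Nat.zero_le n))) ih

lemma X_sub_one_ne_zero : (RatFunc.X - 1 : RatFunc ℚ) ≠ 0 := by
  intro h
  have hx : (RatFunc.X : RatFunc ℚ) = 1 := by linear_combination h
  have := congrArg RatFunc.intDegree hx
  rw [RatFunc.intDegree_X, RatFunc.intDegree_one] at this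
  exact one_ne_zero this

lemma qInt_key (i a b : ℕ) :
    RatFunc.X ^ i * qInt (a + 1) * qInt (b + 1) + qInt i * qInt (i + a + b + 2)
      = qInt (i + a + 1) * qInt (i + b + 1) := by
  have h2 : (RatFunc.X - 1 : RatFunc ℚ) ^ 2 ≠ 0 := pow_ne_zero _ X_sub_one_ne_zero
  apply mul_left_cancel₀ h2
  have g1 := qInt_geom (a+1); have g2 := qInt_geom (b+1); have g3 := qInt_geom i
  have g4 := qInt_geom (i+a+b+2); have g5 := qInt_geom (i+a+1); have g6 := qInt_geom (i+b+1)
  linear_combination (RatFunc.X^i * (RatFunc.X-1) * qInt (b+1)) * g1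
    + (RatFunc.X^i * (RatFunc.X^(a+1)-1)) * g2
    + ((RatFunc.X-1) * qInt (i+a+b+2)) * g3
    + (RatFunc.X^i - 1) * g4
    - ((RatFunc.X-1) * qInt (i+b+1)) * g5
    - (RatFunc.X^(i+a+1) - 1) * g6

lemma qBinom_eq (n k m : ℕ) (hkm : k + m = n) :
    qBinom n k = qFact n / (qFact k * qFact m) := by
  rw [qBinom, if_pos (by omega), show n - k = m from by omega]

lemma qBinom_generic (j a b : ℕ) :
    RatFunc.X ^ (j+1) * qBinom (j+a+1) (j+1) * qBinom (j+a+b+2) (j+a+2)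
      + qBinom (j+a+1) j * qBinom (j+a+b+3) (j+a+2)
    = qBinom (j+b+2) (j+1) * qBinom (j+a+b+2) (a+1) := by
  rw [qBinom_eq (j+a+1) (j+1) a (by omega), qBinom_eq (j+a+b+2) (j+a+2) b (by omega),
      qBinom_eq (j+a+1) j (a+1) (by omega), qBinom_eq (j+a+b+3) (j+a+2) (b+1) (by omega),
      qBinom_eq (j+b+2) (j+1) (b+1) (by omega), qBinom_eq (j+a+b+2) (a+1) (j+b+1) (by omega)]
  have K := qInt_key (j+1) a b
  rw [show j+1+a+b+2 = j+a+b+3 from by omega, show j+1+a+1 = j+a+2 from by omega,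
      show j+1+b+1 = j+b+2 from by omega] at K
  have R1 : qFact (j+1) = qInt (j+1) * qFact j := rfl
  have R2 : qFact (a+1) = qInt (a+1) * qFact a := rfl
  have R3 : qFact (b+1) = qInt (b+1) * qFact b := rfl
  have R4 : qFact (j+a+2) = qInt (j+a+2) * qFact (j+a+1) := rfl
  have R5 : qFact (j+a+b+3) = qInt (j+a+b+3) * qFact (j+a+b+2) := rfl
  have R6 : qFact (j+b+2) = qInt (j+b+2) * qFact (j+b+1) := rfl
  rw [R1, R2, R3, R4, R5, R6]
  have n1 := qFact_ne_zero j
  have n2 := qFact_ne_zero a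
  have n3 := qFact_ne_zero b
  have n4 := qFact_ne_zero (j+a+1)
  have n5 := qFact_ne_zero (j+a+b+2)
  have n6 := qFact_ne_zero (j+b+1)
  have m1 : qInt (j+1) ≠ 0 := qInt_ne_zero (by omega)
  have m2 : qInt (a+1) ≠ 0 := qInt_ne_zero (by omega)
  have m3 : qInt (b+1) ≠ 0 := qInt_ne_zero (by omega)
  have m4 : qInt (j+a+2) ≠ 0 := qInt_ne_zero (by omega)
  have m5 : qInt (j+a+b+3) ≠ 0 := qInt_ne_zero (by omega)
  have m6 : qInt (j+b+2) ≠ 0 := qInt_ne_zero (by omega)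
  field_simp
  exact K

/-- The `q`-binomial identity of D'Adderio–Vanden Wyngaerd (Lemma 2.12); the term
`qbinom (h-1) (i-1)` is interpreted as `0` when `i = 0` (lower index `-1`). -/
theorem qBinom_magic_identity (h r i : ℕ) (hh : 1 ≤ h) (hi : i ≤ h - 1) :
    RatFunc.X ^ i * qBinom (h - 1) i * qBinom (h + r - i - 1) h
      + (if i = 0 then 0 else qBinom (h - 1) (i - 1)) * qBinom (h + r - i) h
    = qBinom r i * qBinom (h + r - i - 1) (h - i) := by
  by_cases hri : r < i
  · rw [show qBinom (h+r-i-1) h = 0 from if_neg (by omega),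
        show qBinom (h+r-i) h = 0 from if_neg (by omega),
        show qBinom r i = 0 from if_neg (by omega)]
    ring
  push_neg at hri
  have B0 : ∀ n, qBinom n 0 = 1 := by
    intro n
    rw [qBinom, if_pos (Nat.zero_le n), show qFact 0 = 1 from rfl, one_mul,
        Nat.sub_zero, div_self (qFact_ne_zero n)]
  have B1 : ∀ n, qBinom n n = 1 := by
    intro n
    rw [qBinom, if_pos le_rfl, Nat.sub_self, show qFact 0 = 1 from rfl, mul_one,
        div_self (qFact_ne_zero n)]
  rcases eq_or_lt_of_le hri with hrieq | hrilt
  · -- r = i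
    subst hrieq
    rcases Nat.eq_zero_or_pos i with rfl | hr1
    · rw [if_pos rfl, show qBinom (h+0-0-1) h = 0 from if_neg (by omega),
          show qBinom (h+0-0-1) (h-0) = 0 from if_neg (by omega)]
      ring
    · rw [if_neg (by omega), show h + i - i - 1 = h - 1 from by omega,
          show h + i - i = h from by omega,
          show qBinom (h-1) h = 0 from if_neg (by omega), B1, B1]
      rw [qBinom_eq (h-1) (i-1) (h-i) (by omega), qBinom_eq (h-1) (h-i) (i-1) (by omega)]
      ring
  · -- i < r
    rcases Nat.eq_zero_or_pos i with rfl | hi1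
    · rw [if_pos rfl, pow_zero,
          show h + r - 0 - 1 = h + r - 1 from by omega, show h + r - 0 = h + r from by omega,
          show h - 0 = h from by omega, B0, B0]
      ring
    · obtain ⟨j, rfl⟩ : ∃ j, i = j + 1 := ⟨i - 1, by omega⟩
      obtain ⟨a, rfl⟩ : ∃ a, h = j + a + 2 := ⟨h - j - 2, by omega⟩
      obtain ⟨b, rfl⟩ : ∃ b, r = j + b + 2 := ⟨r - j - 2, by omega⟩
      rw [if_neg (by omega)]
      rw [show j + a + 2 + (j + b + 2) - (j+1) - 1 = j + a + b + 2 from by omega,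
          show j + a + 2 + (j + b + 2) - (j+1) = j + a + b + 3 from by omega,
          show j + a + 2 - (j+1) = a + 1 from by omega,
          show j + a + 2 - 1 = j + a + 1 from by omega,
          show j + 1 - 1 = j from by omega]
      exact qBinom_generic j a b
end

section
/- There is a bijective correspondence between m × n parallelogram polyominoes and Dyck words of length m + n in the ordered alphabet 0̄ < 1 < 1̄ < 2 < 2̄ < ⋯ with exactly one letter 0̄ (occurring as the first letter), exactly m unbarred letters, and exactly n barred letters, for all m, n ≥ 1. -/
open Finset

/-! ## Lattice-path preliminaries for parallelogram polyominoes.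
Paths are lists of booleans: `true` = north step, `false` = east step. -/

/-- Interlacing `D = (r₁, 1-g₁, r₂, 1-g₂, …)` of the red path and the complemented green path. -/
def interlace : List Bool → List Bool → List Bool
  | [], _ => []
  | _ :: _, [] => []
  | a :: as, b :: bs => a :: (!b) :: interlace as bs

/-- Reading levels along a 0/1 word: on a `true` record the current level and go up one level,
on a `false` go down one level (recording nothing). -/
def levels : List Bool → ℕ → List ℕ
  | [], _ => []
  | true :: rest, l => l :: levels rest (l + 1)
  | false :: rest, l => levels rest (l - 1)

def countTrue (l : List Bool) : ℕ := (l.filter fun b => b = true).length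
def countFalse (l : List Bool) : ℕ := (l.filter fun b => b = false).length

/-- The number of `true`s (north steps) occurring before the `(x+1)`-st `false` (east step):
the height of the path along the column `x ↦ x+1`. -/
def colHeight : List Bool → ℕ → ℕ
  | [], _ => 0
  | true :: rest, k => colHeight rest k + 1
  | false :: _, 0 => 0
  | false :: rest, k + 1 => colHeight rest k

/-- The number of `false`s (east steps) occurring before the `(y+1)`-st `true` (north step). -/
def colX (p : List Bool) (y : ℕ) : ℕ := colHeight (p.map fun b => !b) y

/-- `r` and `g` are the red (upper) and green (lower) boundary paths of an `m × n`
parallelogram polyomino: both go from `(0,0)` to `(m,n)` and the red one stays strictly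
above the green one except at the endpoints. -/
def IsPolyo (m n : ℕ) (r g : List Bool) : Prop :=
  r.length = m + n ∧ g.length = m + n ∧ countTrue r = n ∧ countTrue g = n ∧
    ∀ i : ℕ, 1 ≤ i → i < m + n → countTrue (g.take i) < countTrue (r.take i)

/-- Reduced parallelogram polyomino: the red path stays weakly above the green one. -/
def IsRPolyo (m n : ℕ) (r g : List Bool) : Prop :=
  r.length = m + n ∧ g.length = m + n ∧ countTrue r = n ∧ countTrue g = n ∧
    ∀ i : ℕ, countTrue (g.take i) ≤ countTrue (r.take i)

/-- The area word of a (standard) parallelogram polyomino, as the list of letters of the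
alphabet `0̄ < 1 < 1̄ < 2 < 2̄ < ⋯` encoded by their indices `0, 1, 2, 3, 4, …`.
Barred letters have even index, unbarred letters odd index. -/
def areaWord (r g : List Bool) : List ℕ := levels (interlace r g) 0

/-- The numerical value of the letter with index `j` in the alphabet `0̄ < 1 < 1̄ < 2 < ⋯`. -/
def wval (j : ℕ) : ℕ := (j + 1) / 2

/-- The number of unit cells strictly between the two boundary paths. -/
def cellArea (m : ℕ) (r g : List Bool) : ℕ :=
  ∑ x ∈ Finset.range m, (colHeight r x - colHeight g x)

/-- `area` as the sum of the values of the letters of the area word. -/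
def areaStat (r g : List Bool) : ℕ := ((areaWord r g).map wval).sum

/-- `dinv`: the number of pairs of letters of the area word such that the rightmost letter is
the successor (in the alphabet `0̄ < 1 < 1̄ < ⋯`) of the leftmost one. -/
def dinvStat (r g : List Bool) : ℕ :=
  ((Finset.range (areaWord r g).length ×ˢ Finset.range (areaWord r g).length).filter
    fun p => p.1 < p.2 ∧ (areaWord r g).getD p.2 0 = (areaWord r g).getD p.1 0 + 1).card

/-- A rise of the area word: a barred letter immediately followed by its successor. -/
def IsRise (w : List ℕ) (i : ℕ) : Prop :=
  i + 1 < w.length ∧ w.getD i 0 % 2 = 0 ∧ w.getD (i + 1) 0 = w.getD i 0 + 1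

/-- `underlined area`: the sum of the values of the letters of the area word, ignoring the
(barred) letters at the decorated positions `D`. -/
def uareaStat (r g : List Bool) (D : Finset ℕ) : ℕ :=
  ∑ i ∈ Finset.range (areaWord r g).length \ D, wval ((areaWord r g).getD i 0)

/-- A Dyck word in the totally ordered alphabet `0̄ < 1 < 1̄ < 2 < 2̄ < ⋯` (letters encoded by
their indices): whenever a letter is greater than its predecessor, it is its immediate
successor. Unbarred letters have odd index, barred letters even index. -/
def IsDyckWordAlpha (w : List ℕ) : Prop :=
  ∀ i : ℕ, i + 1 < w.length → w.getD i 0 < w.getD (i + 1) 0 →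
    w.getD (i + 1) 0 = w.getD i 0 + 1

def stp (l : ℕ) (b : Bool) : ℕ := cond b (l+1) (l-1)

def flv (D : List Bool) (l : ℕ) : ℕ := D.foldl stp l

def NT : List Bool → ℕ → Prop
  | [], _ => True
  | true :: rest, l => NT rest (l+1)
  | false :: rest, l => 1 ≤ l ∧ NT rest (l-1)

def bld : List ℕ → List Bool
  | [] => []
  | [a] => true :: List.replicate (a+1) false
  | a :: b :: rest => true :: (List.replicate (a+1-b) false ++ bld (b :: rest))

def unpair : List Bool → List Bool × List Bool
  | [] => ([], [])
  | [a] => ([a], [])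
  | a :: b :: rest => (a :: (unpair rest).1, (!b) :: (unpair rest).2)

def ctE : List Bool → ℕ
  | [] => 0
  | [a] => cond a 1 0
  | a :: _ :: rest => cond a 1 0 + ctE rest

def ctO (D : List Bool) : ℕ := ctE D.tail

def cfE : List Bool → ℕ
  | [] => 0
  | [a] => cond a 0 1
  | a :: _ :: rest => cond a 0 1 + cfE rest

def cfO (D : List Bool) : ℕ := cfE D.tail

/- basic count lemmas -/
@[simp] lemma countTrue_nil : countTrue [] = 0 := rfl
@[simp] lemma countFalse_nil : countFalse [] = 0 := rfl
@[simp] lemma countTrue_cons (x : Bool) (t : List Bool) :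
    countTrue (x :: t) = cond x 1 0 + countTrue t := by
  cases x <;> simp [countTrue, List.filter_cons] <;> omega

@[simp] lemma countFalse_cons (x : Bool) (t : List Bool) :
    countFalse (x :: t) = cond x 0 1 + countFalse t := by
  cases x <;> simp [countFalse, List.filter_cons] <;> omega

lemma countTrue_add_countFalse (l : List Bool) : countTrue l + countFalse l = l.length := by
  induction l with
  | nil => rfl
  | cons x t ih => cases x <;> simp <;> omega

/- flv lemmas -/
@[simp] lemma flv_nil (l : ℕ) : flv [] l = l := rfl
@[simp] lemma flv_cons (x : Bool) (D : List Bool) (l : ℕ) : flv (x :: D) l = flv D (stp l x) := rfl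
lemma flv_append (xs ys : List Bool) (l : ℕ) : flv (xs ++ ys) l = flv ys (flv xs l) :=
  List.foldl_append ..

@[simp] lemma flv_replicate_false (k l : ℕ) : flv (List.replicate k false) l = l - k := by
  induction k generalizing l with
  | zero => simp
  | succ k ih => simp [List.replicate_succ, stp, ih]; omega

lemma flv_take_append (xs ys : List Bool) (l j : ℕ) :
    flv ((xs ++ ys).take j) l = flv (ys.take (j - xs.length)) (flv (xs.take j) l) := by
  rw [List.take_append, flv_append]

lemma flv_take_succ (D : List Bool) (l j : ℕ) (h : j < D.length) :
    flv (D.take (j+1)) l = stp (flv (D.take j) l) (D.getD j false) := by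
  rw [List.take_succ, List.getElem?_eq_getElem h]
  rw [flv_append, List.getD_eq_getElem _ _ h]
  rfl

/- NT lemmas -/
@[simp] lemma NT_nil (l : ℕ) : NT [] l := trivial

lemma NT_append (xs ys : List Bool) (l : ℕ) : NT (xs ++ ys) l ↔ NT xs l ∧ NT ys (flv xs l) := by
  induction xs generalizing l with
  | nil => simp [NT]
  | cons x t ih => cases x <;> simp [NT, ih, stp] <;> tauto

lemma NT_replicate_false (k l : ℕ) : NT (List.replicate k false) l ↔ k ≤ l := by
  induction k generalizing l with
  | zero => simp [NT]
  | succ k ih => simp [List.replicate_succ, NT, ih]; omega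

lemma NT_take (D : List Bool) (l j : ℕ) (h : NT D l) : NT (D.take j) l := by
  induction D generalizing l j with
  | nil => simp
  | cons x t ih =>
    cases j with
    | zero => simp
    | succ j => cases x <;> simp_all [NT]

/- levels lemmas -/
lemma levels_append (xs ys : List Bool) (l : ℕ) :
    levels (xs ++ ys) l = levels xs l ++ levels ys (flv xs l) := by
  induction xs generalizing l with
  | nil => simp [levels]
  | cons x t ih => cases x <;> simp [levels, ih, stp]

@[simp] lemma levels_replicate_false (k l : ℕ) : levels (List.replicate k false) l = [] := by
  induction k generalizing l with
  | zero => rfl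
  | succ k ih => simp [List.replicate_succ, levels, ih]

lemma levels_length (D : List Bool) (l : ℕ) : (levels D l).length = countTrue D := by
  induction D generalizing l with
  | nil => rfl
  | cons x t ih => cases x <;> simp [levels, ih] <;> omega

lemma levels_head_le (D : List Bool) (l x : ℕ) (h : (levels D l).head? = some x) : x ≤ l := by
  induction D generalizing l with
  | nil => simp [levels] at h
  | cons b t ih =>
    cases b
    · simp only [levels] at h
      have := ih (l-1) h
      omega
    · simp only [levels, List.head?_cons, Option.some.injEq] at h; omega

lemma levels_chain (D : List Bool) (l : ℕ) :
    List.Chain' (fun a b => b ≤ a + 1) (levels D l) := by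
  induction D generalizing l with
  | nil => simp [levels, List.Chain']
  | cons b t ih =>
    cases b
    · exact ih _
    · simp only [levels]
      rw [List.Chain', List.isChain_cons]
      refine ⟨fun y hy => ?_, ih _⟩
      exact levels_head_le _ _ _ hy

lemma dyck_levels (D : List Bool) (l : ℕ) : IsDyckWordAlpha (levels D l) := by
  intro i hi hlt
  have hch := levels_chain D l
  rw [List.Chain', List.isChain_iff_getElem] at hch
  have h1 : i < (levels D l).length - 1 := by omega
  have := hch i hi
  rw [List.getD_eq_getElem _ _ (by omega : i < (levels D l).length),
    List.getD_eq_getElem _ _ hi] at *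
  omega

/- interlace lemmas -/
@[simp] lemma interlace_nil (g : List Bool) : interlace [] g = [] := rfl
@[simp] lemma interlace_cons (a b : Bool) (as bs : List Bool) :
    interlace (a :: as) (b :: bs) = a :: (!b) :: interlace as bs := rfl

lemma ctE_cons (x : Bool) (D : List Bool) : ctE (x :: D) = cond x 1 0 + ctO D := by
  cases D <;> simp [ctE, ctO]

@[simp] lemma ctO_cons (x : Bool) (D : List Bool) : ctO (x :: D) = ctE D := rfl

lemma ctE_interlace : ∀ r g : List Bool, r.length = g.length →
    ctE (interlace r g) = countTrue r
  | [], [], _ => rfl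
  | a :: r', b :: g', h => by
    simp only [interlace_cons, ctE_cons, ctO_cons, countTrue_cons]
    rw [ctE_interlace r' g' (by simpa using h)]

lemma ctO_interlace : ∀ r g : List Bool, r.length = g.length →
    ctO (interlace r g) = countFalse g
  | [], [], _ => rfl
  | a :: r', b :: g', h => by
    simp only [interlace_cons, ctO_cons, ctE_cons, countFalse_cons]
    rw [ctO_interlace r' g' (by simpa using h)]
    cases b <;> rfl

lemma countTrue_interlace : ∀ r g : List Bool, r.length = g.length →
    countTrue (interlace r g) = countTrue r + countFalse g
  | [], [], _ => rfl
  | a :: r', b :: g', h => by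
    simp only [interlace_cons, countTrue_cons]
    rw [countTrue_interlace r' g' (by simpa using h)]
    cases a <;> cases b <;> simp <;> omega

/- unpair lemmas -/
lemma unpair_interlace : ∀ r g : List Bool, r.length = g.length →
    unpair (interlace r g) = (r, g)
  | [], [], _ => rfl
  | a :: r', b :: g', h => by
    have h' : r'.length = g'.length := by simpa using h
    have := unpair_interlace r' g' h'
    cases r' with
    | nil =>
      cases g' with
      | nil => simp [interlace, unpair]
      | cons _ _ => simp at h'
    | cons c r'' =>
      cases g' with
      | nil => simp at h'
      | cons d g'' =>
        simp only [interlace_cons] at this ⊢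
        simp only [unpair] at this ⊢
        simp only [Prod.mk.injEq, List.cons.injEq, Bool.not_not, true_and] at this ⊢
        exact this

lemma interlace_unpair : ∀ (D : List Bool) (k : ℕ), D.length = 2*k →
    interlace (unpair D).1 (unpair D).2 = D
  | [], _, _ => rfl
  | [a], k, h => by simp at h; omega
  | a :: b :: rest, k, h => by
    have : rest.length = 2*(k-1) := by simp at h; omega
    simp [unpair, interlace_unpair rest (k-1) this]

lemma unpair_length : ∀ D : List Bool,
    (unpair D).1.length = (D.length+1)/2 ∧ (unpair D).2.length = D.length/2
  | [] => by simp [unpair]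
  | [a] => by simp [unpair]
  | a :: b :: rest => by
    have := unpair_length rest
    simp only [unpair, List.length_cons]
    omega

lemma countTrue_unpair_fst : ∀ D : List Bool, countTrue (unpair D).1 = ctE D
  | [] => rfl
  | [a] => by simp [unpair, ctE]
  | a :: b :: rest => by
    have := countTrue_unpair_fst rest
    simp [unpair, ctE, this]

lemma countTrue_unpair_snd : ∀ D : List Bool, countTrue (unpair D).2 = cfO D
  | [] => rfl
  | [a] => by simp [unpair, cfO, cfE]
  | a :: b :: rest => by
    have := countTrue_unpair_snd rest
    simp only [unpair, countTrue_cons, this, cfO, List.tail_cons]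
    cases rest with
    | nil => cases b <;> simp [cfE]
    | cons c t =>
      simp only [cfE]
      cases b <;> simp [cfO] <;> omega

lemma ctO_add_cfO : ∀ D : List Bool, ctO D + cfO D = D.length / 2
  | [] => rfl
  | [a] => by simp [ctO, cfO, ctE, cfE]
  | a :: b :: rest => by
    have := ctO_add_cfO rest
    simp only [ctO, cfO, List.tail_cons, List.length_cons] at *
    cases rest with
    | nil => cases b <;> simp [ctE, cfE]
    | cons c t =>
      simp only [ctE, cfE] at *
      cases b <;> simp at * <;> omega

/- parity counting -/
lemma count_parity : ∀ (D : List Bool) (l : ℕ), NT D l →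
    ((levels D l).filter fun x => (x + l) % 2 = 0).length = ctE D ∧
    ((levels D l).filter fun x => (x + l) % 2 = 1).length = ctO D := by
  intro D
  induction D with
  | nil => intro l _; simp [levels, ctE, ctO]
  | cons x t ih =>
    intro l hNT
    cases x with
    | true =>
      simp only [NT] at hNT
      have iht := ih (l+1) hNT
      constructor
      · simp only [levels, List.filter_cons]
        have : ((l + l) % 2 = 0) = True := by simp; omega
        rw [List.filter_congr (l := levels t (l+1))
          (q := fun x => decide ((x + (l+1)) % 2 = 1)) (fun y _ => by simp; omega)]
        simp [this, iht.2, ctE_cons]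
        omega
      · simp only [levels, List.filter_cons]
        have : ((l + l) % 2 = 1) = False := by simp; omega
        rw [List.filter_congr (l := levels t (l+1))
          (q := fun x => decide ((x + (l+1)) % 2 = 0)) (fun y _ => by simp; omega)]
        simp [this, iht.1, ctO_cons]
    | false =>
      obtain ⟨hl, hNT'⟩ := hNT
      have iht := ih (l-1) hNT'
      constructor
      · simp only [levels]
        rw [List.filter_congr (l := levels t (l-1))
          (q := fun x => decide ((x + (l-1)) % 2 = 1)) (fun y _ => by simp; omega)]
        simp [iht.2, ctE_cons]
      · simp only [levels]
        rw [List.filter_congr (l := levels t (l-1))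
          (q := fun x => decide ((x + (l-1)) % 2 = 0)) (fun y _ => by simp; omega)]
        simp [iht.1, ctO_cons]

/- the bridge between level values and count differences -/
lemma bridge : ∀ (i : ℕ) (r g : List Bool) (l : ℕ), r.length = g.length → i ≤ r.length →
    NT ((interlace r g).take (2*i)) l →
    flv ((interlace r g).take (2*i)) l + 2 * countTrue (g.take i)
      = l + 2 * countTrue (r.take i) := by
  intro i
  induction i with
  | zero => intro r g l _ _ _; simp
  | succ i ih =>
    intro r g l hlen hle hNT
    match r, g with
    | a :: r', b :: g' =>
      have hlen' : r'.length = g'.length := by simpa using hlen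
      have hle' : i ≤ r'.length := by simp at hle; omega
      have h2 : 2*(i+1) = (2*i) + 1 + 1 := by omega
      rw [h2] at hNT ⊢
      simp only [interlace_cons, List.take_succ_cons] at hNT ⊢
      simp only [List.take_succ_cons, countTrue_cons]
      cases a <;> cases b <;>
        simp only [NT, Bool.not_true, Bool.not_false, flv_cons, stp, cond_true, cond_false]
          at hNT ⊢
      · -- a = false, b = false : step down then up
        obtain ⟨h1, hNT'⟩ := hNT
        have := ih r' g' (l - 1 + 1) hlen' hle' hNT'
        omega
      · -- a = false, b = true : down, down
        obtain ⟨h1, h2', hNT'⟩ := hNT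
        have := ih r' g' (l - 1 - 1) hlen' hle' hNT'
        omega
      · -- a = true, b = false : up, up
        have := ih r' g' (l + 1 + 1) hlen' hle' hNT
        omega
      · -- a = true, b = true : up, down
        obtain ⟨h1, hNT'⟩ := hNT
        have := ih r' g' (l + 1 - 1) hlen' hle' hNT'
        omega

lemma flv_take_parity : ∀ (D : List Bool) (l j : ℕ), NT D l → j ≤ D.length →
    (flv (D.take j) l + l + j) % 2 = 0 := by
  intro D
  induction D with
  | nil => intro l j _ h; simp at h; simp [h]; omega
  | cons x t ih =>
    intro l j hNT hj
    cases j with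
    | zero => simp; omega
    | succ j =>
      simp only [List.take_succ_cons, flv_cons]
      cases x with
      | true =>
        have := ih (l+1) j hNT (by simpa using hj)
        simp only [stp, cond_true] at *
        omega
      | false =>
        obtain ⟨hl, hNT'⟩ := hNT
        have := ih (l-1) j hNT' (by simpa using hj)
        simp only [stp, cond_false] at *
        omega

/- the credit invariant -/
inductive QQ : ℕ → List Bool → Prop
  | base : QQ 1 [false, false]
  | cons {c c' : ℕ} {d1 d2 : Bool} {rest : List Bool} (h1 : 1 ≤ c)
      (he : c + (cond d1 1 0) + (cond d2 1 0) = c' + 1) (hq : QQ c' rest) :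
      QQ c (d1 :: d2 :: rest)

lemma QQ_one_le {c : ℕ} {D : List Bool} (h : QQ c D) : 1 ≤ c := by
  cases h with
  | base => exact le_refl 1
  | cons h1 _ _ => exact h1

lemma QQ_NT {c : ℕ} {D : List Bool} (h : QQ c D) : NT D (2*c) := by
  induction h with
  | base => simp [NT]
  | @cons c c' d1 d2 rest h1 he hq ih =>
    cases d1 <;> cases d2 <;>
      simp only [cond_true, cond_false, Nat.add_zero, Nat.add_eq] at he <;>
      simp only [NT]
    · -- d1 = false, d2 = false
      refine ⟨by omega, by omega, ?_⟩
      rw [show 2*c - 1 - 1 = 2*c' from by omega]; exact ih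
    · -- d1 = false, d2 = true
      refine ⟨by omega, ?_⟩
      rw [show 2*c - 1 + 1 = 2*c' from by omega]; exact ih
    · -- d1 = true, d2 = false
      refine ⟨by omega, ?_⟩
      rw [show 2*c + 1 - 1 = 2*c' from by omega]; exact ih
    · -- d1 = true, d2 = true
      rw [show 2*c + 1 + 1 = 2*c' from by omega]; exact ih

lemma QQ_pos {c : ℕ} {D : List Bool} (h : QQ c D) : ∀ x ∈ levels D (2*c), 1 ≤ x := by
  induction h with
  | base => simp [levels]
  | @cons c c' d1 d2 rest h1 he hq ih =>
    intro x hx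
    cases d1 <;> cases d2 <;>
      simp only [cond_true, cond_false, Nat.add_zero, Nat.add_eq] at he <;>
      simp only [levels, List.mem_cons] at hx
    · -- false false
      rw [show 2*c - 1 - 1 = 2*c' from by omega] at hx
      exact ih x hx
    · -- false true
      rcases hx with rfl | hx
      · omega
      · rw [show 2*c - 1 + 1 = 2*c' from by omega] at hx
        exact ih x hx
    · -- true false
      rcases hx with rfl | hx
      · omega
      · rw [show 2*c + 1 - 1 = 2*c' from by omega] at hx
        exact ih x hx
    · -- true true
      rcases hx with rfl | rfl | hx
      · omega
      · omega
      · rw [show 2*c + 1 + 1 = 2*c' from by omega] at hx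
        exact ih x hx

lemma polyo_QQ : ∀ (r g : List Bool) (c : ℕ), r.length = g.length → 0 < r.length →
    (∀ i, i < r.length → countTrue (g.take i) + 1 ≤ countTrue (r.take i) + c) →
    (countTrue g = countTrue r + c) → QQ c (interlace r g)
  | [a], [b], c, _, _, hst, htot => by
    have h0 := hst 0 (by simp)
    simp at h0
    simp at htot
    have hb : b = true ∧ a = false ∧ c = 1 := by
      cases a <;> cases b <;> simp at htot ⊢ <;> omega
    obtain ⟨rfl, rfl, rfl⟩ := hb
    exact QQ.base
  | a :: b' :: r', g0 :: g', c, hlen, _, hst, htot => by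
    match g' with
    | g1 :: g'' =>
      have hlen' : (b' :: r').length = (g1 :: g'').length := by simpa using hlen
      have h0 := hst 0 (by simp)
      simp at h0
      have h1 := hst 1 (by simp)
      simp only [List.take_succ_cons, List.take_zero, countTrue_cons, countTrue_nil] at h1
      -- c' := c + cond a 1 0 - cond g0 1 0
      obtain ⟨c', hc'1, hc'2⟩ : ∃ c', c + cond a 1 0 = c' + cond g0 1 0 ∧ 1 ≤ c' := by
        refine ⟨c + cond a 1 0 - cond g0 1 0, ?_, ?_⟩ <;>
          cases a <;> cases g0 <;> simp at h1 ⊢ <;> omega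
      refine QQ.cons (by omega) (c' := c') ?_ ?_
      · cases g0 <;> simp at hc'1 ⊢ <;> omega
      · refine polyo_QQ _ _ c' hlen' (by simp) ?_ ?_
        · intro i hi
          have := hst (i+1) (by simpa using Nat.succ_lt_succ hi)
          simp only [List.take_succ_cons, countTrue_cons] at this
          cases a <;> cases g0 <;> simp at this hc'1 ⊢ <;> omega
        · simp only [countTrue_cons] at htot
          cases a <;> cases g0 <;> simp at htot hc'1 ⊢ <;> omega

/- build lemmas -/
lemma levels_bld : ∀ (w : List ℕ) (a : ℕ), w.head? = some a →
    List.Chain' (fun x y => y ≤ x + 1) w → levels (bld w) a = w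
  | [a'], a, hh, _ => by
    obtain rfl : a = a' := by simpa using hh.symm
    simp [bld, levels]
  | a' :: b :: rest, a, hh, hch => by
    obtain rfl : a = a' := by simpa using hh.symm
    have hb : b ≤ a + 1 := (List.isChain_cons_cons.mp hch).1
    have ih := levels_bld (b :: rest) b (by simp) (List.isChain_cons_cons.mp hch).2
    simp only [bld, levels, levels_append, levels_replicate_false, List.nil_append,
      flv_replicate_false]
    rw [show a + 1 - (a + 1 - b) = b from by omega, ih]

lemma bld_length : ∀ (w : List ℕ) (a : ℕ), w.head? = some a →
    List.Chain' (fun x y => y ≤ x + 1) w → (bld w).length = 2 * w.length + a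
  | [a'], a, hh, _ => by
    obtain rfl : a = a' := by simpa using hh.symm
    simp [bld]; omega
  | a' :: b :: rest, a, hh, hch => by
    obtain rfl : a = a' := by simpa using hh.symm
    have hb : b ≤ a + 1 := (List.isChain_cons_cons.mp hch).1
    have ih := bld_length (b :: rest) b (by simp) (List.isChain_cons_cons.mp hch).2
    simp only [bld, List.length_cons, List.length_append, List.length_replicate, ih]
    omega

lemma NT_bld : ∀ (w : List ℕ) (a : ℕ), w.head? = some a →
    List.Chain' (fun x y => y ≤ x + 1) w → NT (bld w) a
  | [a'], a, hh, _ => by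
    obtain rfl : a = a' := by simpa using hh.symm
    simp [bld, NT, NT_replicate_false]
  | a' :: b :: rest, a, hh, hch => by
    obtain rfl : a = a' := by simpa using hh.symm
    have hb : b ≤ a + 1 := (List.isChain_cons_cons.mp hch).1
    have ih := NT_bld (b :: rest) b (by simp) (List.isChain_cons_cons.mp hch).2
    simp only [bld, NT, NT_append, NT_replicate_false, flv_replicate_false]
    exact ⟨by omega, by rw [show a + 1 - (a + 1 - b) = b from by omega]; exact ih⟩

lemma pos_bld : ∀ (w : List ℕ) (a : ℕ), w.head? = some a →
    List.Chain' (fun x y => y ≤ x + 1) w → (∀ x ∈ w.tail, 1 ≤ x) →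
    ∀ j, 1 ≤ j → j < (bld w).length → 1 ≤ flv ((bld w).take j) a
  | [a'], a, hh, _, _ => by
    obtain rfl : a = a' := by simpa using hh.symm
    intro j hj1 hj2
    simp only [bld, List.length_cons, List.length_replicate] at hj2
    obtain ⟨j', rfl⟩ : ∃ j', j = j' + 1 := ⟨j - 1, by omega⟩
    simp only [bld, List.take_succ_cons, flv_cons, stp, cond_true, List.take_replicate,
      flv_replicate_false]
    omega
  | a' :: b :: rest, a, hh, hch, htl => by
    obtain rfl : a = a' := by simpa using hh.symm
    have hb : b ≤ a + 1 := (List.isChain_cons_cons.mp hch).1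
    have hb1 : 1 ≤ b := htl b (by simp)
    intro j hj1 hj2
    obtain ⟨j', rfl⟩ : ∃ j', j = j' + 1 := ⟨j - 1, by omega⟩
    simp only [bld, List.take_succ_cons, flv_cons, stp, cond_true]
    rw [flv_take_append]
    simp only [List.take_replicate, flv_replicate_false, List.length_replicate]
    by_cases hc : j' ≤ a + 1 - b
    · rw [show j' - (a + 1 - b) = 0 from by omega]
      simp
      omega
    · rw [show a + 1 - min j' (a + 1 - b) = b from by omega]
      have ih := pos_bld (b :: rest) b (by simp) (List.isChain_cons_cons.mp hch).2
        (fun x hx => htl x (by simp only [List.tail_cons] at hx ⊢; exact List.mem_cons_of_mem _ hx))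
      refine ih (j' - (a + 1 - b)) (by omega) ?_
      simp only [bld, List.length_cons, List.length_append, List.length_replicate] at hj2
      omega

lemma split_first_true : ∀ L : List Bool,
    (∃ k, L = List.replicate k false) ∨
    (∃ k rest, L = List.replicate k false ++ true :: rest) := by
  intro L
  induction L with
  | nil => exact Or.inl ⟨0, rfl⟩
  | cons x t ih =>
    cases x with
    | true => exact Or.inr ⟨0, t, rfl⟩
    | false =>
      rcases ih with ⟨k, rfl⟩ | ⟨k, rest, rfl⟩
      · exact Or.inl ⟨k+1, by simp [List.replicate_succ]⟩
      · exact Or.inr ⟨k+1, rest, by simp [List.replicate_succ]⟩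

/- the inverse roundtrip: bld ∘ levels = id on good words -/
lemma bld_levels : ∀ (N : ℕ) (D : List Bool) (l : ℕ), D.length ≤ N → NT D l → flv D l = 0 →
    (∀ hd tl, D = hd :: tl → hd = true) → bld (levels D l) = D := by
  intro N
  induction N with
  | zero => intro D l hN _ _ _;
            match D with
            | [] => rfl
            | _ :: _ => simp at hN
  | succ N ih =>
    intro D l hN hNT hflv hhd
    match D with
    | [] => rfl
    | false :: rest => exact absurd (hhd false rest rfl) (by simp)
    | true :: rest =>
      rcases split_first_true rest with ⟨q, rfl⟩ | ⟨k, rest', rfl⟩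
      · -- all false : D = true :: replicate q false
        simp only [NT, NT_replicate_false] at hNT
        simp only [flv_cons, stp, cond_true, flv_replicate_false] at hflv
        have hq : q = l + 1 := by omega
        subst hq
        simp [levels, bld]
      · -- D = true :: replicate k false ++ true :: rest'
        simp only [NT, NT_append, NT_replicate_false, flv_replicate_false] at hNT
        obtain ⟨hk, hNT'⟩ := hNT
        have hflv' : flv (true :: rest') (l + 1 - k) = 0 := by
          simpa [flv_append, stp] using hflv
        have hlen : (true :: rest').length ≤ N := by
          simp only [List.length_cons, List.length_append, List.length_replicate] at hN ⊢
          omega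
        have ih' := ih (true :: rest') (l + 1 - k) hlen hNT' hflv' (by intro hd tl h; injection h with h1 _; exact h1.symm)
        simp only [levels, levels_append, levels_replicate_false, List.nil_append,
          flv_replicate_false]
        simp only [levels] at ih' ⊢
        simp only [bld]
        rw [show l + 1 - (l + 1 - k) = k from by omega]
        rw [ih']
lemma bld_levels_final (D : List Bool) (l : ℕ) (hNT : NT D l) (hflv : flv D l = 0)
    (hhd : ∀ hd tl, D = hd :: tl → hd = true) : bld (levels D l) = D :=
  bld_levels D.length D l (le_refl _) hNT hflv hhd

lemma interlace_length : ∀ r g : List Bool, r.length = g.length →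
    (interlace r g).length = 2 * r.length
  | [], [], _ => rfl
  | a :: r', b :: g', h => by
    simp only [interlace_cons, List.length_cons]
    rw [interlace_length r' g' (by simpa using h)]
    omega

lemma forward_full (m n : ℕ) (hm : 1 ≤ m) (hn : 1 ≤ n) (r g : List Bool)
    (h : IsPolyo m n r g) :
    (IsDyckWordAlpha (levels (interlace r g) 0) ∧
      (levels (interlace r g) 0).length = m + n ∧
      (levels (interlace r g) 0).head? = some 0 ∧
      (levels (interlace r g) 0).count 0 = 1 ∧
      ((levels (interlace r g) 0).filter fun j => j % 2 = 1).length = m ∧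
      ((levels (interlace r g) 0).filter fun j => j % 2 = 0).length = n) ∧
      unpair (bld (levels (interlace r g) 0)) = (r, g) := by
  obtain ⟨hrl, hgl, hrt, hgt, hstrict⟩ := h
  have hmn2 : 2 ≤ m + n := by omega
  obtain ⟨r0, r1, rfl⟩ : ∃ r0 r1, r = r0 :: r1 := by
    cases r with
    | nil => simp at hrl; omega
    | cons r0 r1 => exact ⟨r0, r1, rfl⟩
  obtain ⟨g0, g1, rfl⟩ : ∃ g0 g1, g = g0 :: g1 := by
    cases g with
    | nil => simp at hgl; omega
    | cons g0 g1 => exact ⟨g0, g1, rfl⟩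
  have h1 := hstrict 1 (le_refl 1) (by omega)
  simp only [List.take_succ_cons, List.take_zero, countTrue_cons, countTrue_nil] at h1
  obtain ⟨rfl, rfl⟩ : r0 = true ∧ g0 = false := by
    cases r0 <;> cases g0 <;> simp at h1 ⊢
  have hlen1 : r1.length = g1.length := by
    simp at hrl hgl; omega
  have hQ : QQ 1 (interlace r1 g1) := by
    refine polyo_QQ r1 g1 1 hlen1 (by simp at hrl; omega) ?_ ?_
    · intro i hi
      have := hstrict (i+1) (by omega) (by simp at hrl; omega)
      simp only [List.take_succ_cons, countTrue_cons, cond_true, cond_false] at this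
      omega
    · simp only [countTrue_cons, cond_true, cond_false] at hrt hgt
      omega
  have hNT2 : NT (interlace r1 g1) 2 := by
    have := QQ_NT hQ
    simpa using this
  have hNTD : NT (interlace (true :: r1) (false :: g1)) 0 := by
    simp only [interlace_cons, Bool.not_false, NT]
    exact hNT2
  have hw : levels (interlace (true :: r1) (false :: g1)) 0
      = 0 :: 1 :: levels (interlace r1 g1) 2 := by
    simp [interlace, levels]
  have hpos : ∀ x ∈ levels (interlace r1 g1) 2, 1 ≤ x := by
    have := QQ_pos hQ
    simpa using this
  have hcFg : countFalse (false :: g1) = m := by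
    have := countTrue_add_countFalse (false :: g1)
    omega
  refine ⟨⟨dyck_levels _ _, ?_, ?_, ?_, ?_, ?_⟩, ?_⟩
  · rw [levels_length, countTrue_interlace _ _ (by simpa using hrl.trans hgl.symm)]
    omega
  · rw [hw]; rfl
  · rw [hw]
    simp only [List.count_cons]
    rw [List.count_eq_zero.mpr (fun hc => by have := hpos 0 hc; omega)]
    simp
  · have hcp := (count_parity _ 0 hNTD).2
    rw [List.filter_congr (fun y _ => by simp : ∀ y ∈ levels (interlace (true :: r1) (false :: g1)) 0,
      (decide (y % 2 = 1)) = (decide ((y + 0) % 2 = 1)))]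
    rw [hcp, ctO_interlace _ _ (by simpa using hrl.trans hgl.symm)]
    exact hcFg
  · have hcp := (count_parity _ 0 hNTD).1
    rw [List.filter_congr (fun y _ => by simp : ∀ y ∈ levels (interlace (true :: r1) (false :: g1)) 0,
      (decide (y % 2 = 0)) = (decide ((y + 0) % 2 = 0)))]
    rw [hcp, ctE_interlace _ _ (by simpa using hrl.trans hgl.symm)]
    simpa using hrt
  · -- round trip
    have hflv : flv (interlace (true :: r1) (false :: g1)) 0 = 0 := by
      have hb := bridge (m+n) (true :: r1) (false :: g1) 0 (hrl.trans hgl.symm)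
        (le_of_eq hrl.symm) ?_
      · rw [List.take_of_length_le (by
          rw [interlace_length _ _ (hrl.trans hgl.symm), hrl]),
          List.take_of_length_le (le_of_eq hrl),
          List.take_of_length_le (le_of_eq hgl)] at hb
        omega
      · rw [List.take_of_length_le (by
          rw [interlace_length _ _ (hrl.trans hgl.symm), hrl])]
        exact hNTD
    rw [bld_levels_final _ _ hNTD hflv (by
      intro hd tl hD
      simp only [interlace_cons] at hD
      exact (List.cons.injEq _ _ _ _ ▸ hD).1.symm ▸ rfl)]
    exact unpair_interlace _ _ (hrl.trans hgl.symm)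

lemma backward_full (m n : ℕ) (hm : 1 ≤ m) (hn : 1 ≤ n) (w : List ℕ)
    (hdy : IsDyckWordAlpha w) (hlen : w.length = m + n) (hhd : w.head? = some 0)
    (hcnt : w.count 0 = 1) (hf1 : (w.filter fun j => j % 2 = 1).length = m)
    (hf0 : (w.filter fun j => j % 2 = 0).length = n) :
    IsPolyo m n (unpair (bld w)).1 (unpair (bld w)).2 ∧
      levels (interlace (unpair (bld w)).1 (unpair (bld w)).2) 0 = w := by
  have hmn2 : 2 ≤ m + n := by omega
  -- chain condition
  have hch : List.Chain' (fun x y => y ≤ x + 1) w := by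
    rw [List.Chain', List.isChain_iff_getElem]
    intro i hi
    have h2 : i + 1 < w.length := by omega
    have hd := hdy i h2
    rw [List.getD_eq_getElem _ _ (by omega), List.getD_eq_getElem _ _ h2] at hd
    by_cases hlt : w[i] < w[i+1]
    · have := hd hlt; omega
    · omega
  set D := bld w with hDdef
  have hD0 : levels D 0 = w := levels_bld w 0 hhd hch
  have hDlen : D.length = 2 * (m + n) := by
    rw [hDdef, bld_length w 0 hhd hch, hlen]
    omega
  have hNT : NT D 0 := NT_bld w 0 hhd hch
  have hiu : interlace (unpair D).1 (unpair D).2 = D := interlace_unpair D (m+n) hDlen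
  have hul := unpair_length D
  have hrlen : (unpair D).1.length = m + n := by omega
  have hglen : (unpair D).2.length = m + n := by omega
  -- letters of the tail are positive
  have hpos : ∀ x ∈ w.tail, 1 ≤ x := by
    obtain ⟨w0, w1, rfl⟩ : ∃ w0 w1, w = w0 :: w1 := by
      cases w with
      | nil => simp at hhd
      | cons a b => exact ⟨a, b, rfl⟩
    have hw0 : w0 = 0 := by simpa using hhd
    subst hw0
    have hc1 : List.count 0 w1 = 0 := by
      rw [List.count_cons_self] at hcnt; omega
    have h0 := List.count_eq_zero.mp hc1
    intro x hx
    simp only [List.tail_cons] at hx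
    have : x ≠ 0 := fun hx0 => h0 (hx0 ▸ hx)
    omega
  -- counts
  have hctE : ctE D = n := by
    have hcp := (count_parity D 0 hNT).1
    rw [hD0, List.filter_congr
      (fun y _ => by simp : ∀ y ∈ w, (decide ((y + 0) % 2 = 0)) = (decide (y % 2 = 0)))] at hcp
    rw [hf0] at hcp
    exact hcp.symm
  have hctO : ctO D = m := by
    have hcp := (count_parity D 0 hNT).2
    rw [hD0, List.filter_congr
      (fun y _ => by simp : ∀ y ∈ w, (decide ((y + 0) % 2 = 1)) = (decide (y % 2 = 1)))] at hcp
    rw [hf1] at hcp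
    exact hcp.symm
  have hctr : countTrue (unpair D).1 = n := by rw [countTrue_unpair_fst]; exact hctE
  have hctg : countTrue (unpair D).2 = n := by
    rw [countTrue_unpair_snd]
    have := ctO_add_cfO D
    omega
  refine ⟨⟨hrlen, hglen, hctr, hctg, ?_⟩, by rw [hiu]; exact hD0⟩
  intro i hi1 hi2
  have hbr := bridge i (unpair D).1 (unpair D).2 0 (by omega) (by omega) ?_
  · have hp : 1 ≤ flv (D.take (2*i)) 0 := by
      rw [hDdef]
      refine pos_bld w 0 hhd hch hpos (2*i) (by omega) (by rw [← hDdef]; omega)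
    have hpar := flv_take_parity D 0 (2*i) hNT (by omega)
    rw [hiu] at hbr
    omega
  · rw [hiu]
    exact NT_take D 0 (2*i) hNT


/-- Bijective correspondence (given by the area word) between `m × n` parallelogram
polyominoes and Dyck words of length `m + n` in the alphabet `0̄ < 1 < 1̄ < 2 < ⋯` with
exactly one `0̄` (as first letter), exactly `m` unbarred letters and `n` barred letters. -/
theorem polyomino_equiv_dyckWords (m n : ℕ) (hm : 1 ≤ m) (hn : 1 ≤ n) :
    ∃ e : { p : List Bool × List Bool // IsPolyo m n p.1 p.2 } ≃
        { w : List ℕ // IsDyckWordAlpha w ∧ w.length = m + n ∧ w.head? = some 0 ∧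
            w.count 0 = 1 ∧ (w.filter fun j => j % 2 = 1).length = m ∧
            (w.filter fun j => j % 2 = 0).length = n },
      ∀ P, (e P : List ℕ) = areaWord P.val.1 P.val.2 := by
  refine ⟨⟨fun P => ⟨levels (interlace P.val.1 P.val.2) 0,
      (forward_full m n hm hn P.val.1 P.val.2 P.property).1⟩,
    fun W => ⟨unpair (bld W.val),
      (backward_full m n hm hn W.val W.property.1 W.property.2.1 W.property.2.2.1
        W.property.2.2.2.1 W.property.2.2.2.2.1 W.property.2.2.2.2.2).1⟩,
    fun P => ?_, fun W => ?_⟩, fun P => rfl⟩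
  · apply Subtype.ext
    have := (forward_full m n hm hn P.val.1 P.val.2 P.property).2
    simpa using this
  · apply Subtype.ext
    exact (backward_full m n hm hn W.val W.property.1 W.property.2.1 W.property.2.2.1
        W.property.2.2.2.1 W.property.2.2.2.2.1 W.property.2.2.2.2.2).2
end

section
/- For m, n ≥ 0, k ≥ 0, and 1 ≤ r ≤ m+1, there is a bijection ψ from reduced m × n parallelogram polyominoes with r zeros in the area word and k decorated rises, to two-cars parking functions with n ones and m twos, r−1 twos on the main diagonal, and k decorated rises, preserving both dinv and underlined-area. -/
open Finset

/-! ### Reduced parallelogram polyominoes. -/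

/-- The area word of a reduced parallelogram polyomino, with the initial artificial `0`,
as the list of letters of the alphabet `0 < 0̄ < 1 < 1̄ < 2 < ⋯` encoded by their indices
`0, 1, 2, 3, 4, …`. Barred letters have odd index; the letter of index `j` has value `j / 2`. -/
def areaWordR (r g : List Bool) : List ℕ := 0 :: levels (interlace r g) 1

/-- The value of the letter with index `j` in the alphabet `0 < 0̄ < 1 < 1̄ < ⋯`. -/
def rval (j : ℕ) : ℕ := j / 2

/-- `dinv` of a reduced parallelogram polyomino: the number of pairs of letters of the area
word such that the leftmost is the successor of the rightmost in the alphabet. -/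
def dinvR (r g : List Bool) : ℕ :=
  ((Finset.range (areaWordR r g).length ×ˢ Finset.range (areaWordR r g).length).filter
    fun p => p.1 < p.2 ∧ (areaWordR r g).getD p.1 0 = (areaWordR r g).getD p.2 0 + 1).card

/-- `underlined area` of a reduced parallelogram polyomino with decorated positions `D`
(the unbarred letters of the decorated rises). -/
def uareaR (r g : List Bool) (D : Finset ℕ) : ℕ :=
  ∑ i ∈ Finset.range (areaWordR r g).length \ D, rval ((areaWordR r g).getD i 0)

/-- Carrier for decorated reduced polyominoes: the two paths and the decoration positions
(inside the area word, which has length `m + n + 1`). -/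
abbrev RPolyCarrier (N : ℕ) := ((Fin N → Bool) × (Fin N → Bool)) × Finset (Fin (N + 1))

def RRl {N : ℕ} (P : RPolyCarrier N) : List Bool := List.ofFn P.1.1
def RGl {N : ℕ} (P : RPolyCarrier N) : List Bool := List.ofFn P.1.2
def RDn {N : ℕ} (P : RPolyCarrier N) : Finset ℕ := P.2.image Fin.val

/-- Reduced `m × n` parallelogram polyominoes with `r` zeros (unbarred letters `0`, including
the artificial one) in the area word and `k` decorated rises; a rise is a barred letter
immediately followed by its successor, and the decoration is put on the unbarred letter. -/
abbrev RPStar (m n r k : ℕ) : Type :=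
  { P : RPolyCarrier (m + n) //
    IsRPolyo m n (RRl P) (RGl P) ∧ (areaWordR (RRl P) (RGl P)).count 0 = r ∧
      (∀ j ∈ P.2, 1 ≤ j.val ∧ (areaWordR (RRl P) (RGl P)).getD (j.val - 1) 0 % 2 = 1 ∧
        (areaWordR (RRl P) (RGl P)).getD j.val 0 =
          (areaWordR (RRl P) (RGl P)).getD (j.val - 1) 0 + 1) ∧
      P.2.card = k }

/-! ### Two-cars parking functions. -/

/-- Carrier for decorated two-cars parking functions of size `N`: each row carries a
label/area-word-letter pair, plus a decoration set. -/
abbrev PFCarrier (N : ℕ) := (Fin N → ℕ × ℕ) × Finset (Fin N)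

def PFa {N : ℕ} (P : PFCarrier N) : List ℕ := List.ofFn fun i => (P.1 i).1
def PFb {N : ℕ} (P : PFCarrier N) : List ℕ := List.ofFn fun i => (P.1 i).2
def PFD {N : ℕ} (P : PFCarrier N) : Finset ℕ := P.2.image Fin.val

/-- Valid labelled Dyck path data: `b` is the area word of a Dyck path and the labels `a` are
strictly increasing along columns (consecutive rows in the same column). -/
def IsParkingData (a b : List ℕ) : Prop :=
  b.getD 0 0 = 0 ∧
    ∀ i : ℕ, i + 1 < b.length →
      (b.getD (i + 1) 0 ≤ b.getD i 0 + 1 ∧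
        (b.getD (i + 1) 0 = b.getD i 0 + 1 → a.getD i 0 < a.getD (i + 1) 0))

/-- Two-cars parking functions with `n` labels `1` and `m` labels `2`, `r - 1` twos on the
main diagonal, and `k` decorated rises (a decoration marks the topmost row of a pair of
consecutive vertical steps). -/
abbrev PF2Star (m n r k : ℕ) : Type :=
  { P : PFCarrier (m + n) //
    IsParkingData (PFa P) (PFb P) ∧ (∀ i : Fin (m + n), (P.1 i).1 = 1 ∨ (P.1 i).1 = 2) ∧
      (PFa P).count 1 = n ∧ (PFa P).count 2 = m ∧
      ((Finset.range (m + n)).filter fun i =>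
        (PFb P).getD i 0 = 0 ∧ (PFa P).getD i 0 = 2).card = r - 1 ∧
      (∀ j ∈ P.2, 1 ≤ j.val ∧
        (PFb P).getD j.val 0 = (PFb P).getD (j.val - 1) 0 + 1) ∧
      P.2.card = k }

/-- `dinv` of a parking function given by labels `a` and area word `b`. -/
def dinvPF (a b : List ℕ) : ℕ :=
  ((Finset.range b.length ×ˢ Finset.range b.length).filter fun p =>
    p.1 < p.2 ∧ ((b.getD p.1 0 = b.getD p.2 0 ∧ a.getD p.1 0 < a.getD p.2 0) ∨
      (b.getD p.1 0 = b.getD p.2 0 + 1 ∧ a.getD p.2 0 < a.getD p.1 0))).card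

/-- `underlined area` of a decorated parking function: the sum of the area word, ignoring
the letters of the decorated rows. -/
def uareaPF (b : List ℕ) (D : Finset ℕ) : ℕ :=
  ∑ i ∈ Finset.range b.length \ D, b.getD i 0
/-! ### Auxiliary development for the bijection. -/

namespace PsiAux

/-- No `false` step occurs at level `0` along the walk. -/
def Ok : List Bool → ℕ → Prop
  | [], _ => True
  | true :: rest, l => Ok rest (l + 1)
  | false :: rest, l => 1 ≤ l ∧ Ok rest (l - 1)

def endLevel : List Bool → ℕ → ℕ
  | [], l => l
  | true :: rest, l => endLevel rest (l + 1)
  | false :: rest, l => endLevel rest (l - 1)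

/-- Rebuild the token list from the list of recorded levels, finishing at level `1`. -/
def build : List ℕ → ℕ → List Bool
  | [], l => List.replicate (l - 1) false
  | w :: ws, l => List.replicate (l - w) false ++ true :: build ws (w + 1)

/-- Valid level words: each letter is at most the current level. -/
def WChain : List ℕ → ℕ → Prop
  | [], _ => True
  | w :: ws, l => w ≤ l ∧ WChain ws (w + 1)

/-- Undo the interlacing. -/
def splitRG : List Bool → List Bool × List Bool
  | a :: b :: rest => (a :: (splitRG rest).1, (!b) :: (splitRG rest).2)
  | _ => ([], [])

lemma countTrue_cons (a : Bool) (t : List Bool) :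
    countTrue (a :: t) = (if a then 1 else 0) + countTrue t := by
  cases a <;> simp [countTrue, List.filter] <;> omega

lemma countFalse_cons (a : Bool) (t : List Bool) :
    countFalse (a :: t) = (if a then 0 else 1) + countFalse t := by
  cases a <;> simp [countFalse, List.filter] <;> omega

lemma countTrue_nil : countTrue [] = 0 := rfl
lemma countFalse_nil : countFalse [] = 0 := rfl

lemma countTrue_add_countFalse (t : List Bool) : countTrue t + countFalse t = t.length := by
  induction t with
  | nil => rfl
  | cons a t ih => cases a <;> simp [countTrue_cons, countFalse_cons] <;> omega

lemma levels_length (t : List Bool) (l : ℕ) : (levels t l).length = countTrue t := by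
  induction t generalizing l with
  | nil => rfl
  | cons a t ih => cases a <;> simp [levels, ih, countTrue_cons] <;> omega

lemma levels_head_le (t : List Bool) (l : ℕ) {w : ℕ} {ws : List ℕ}
    (h : levels t l = w :: ws) : w ≤ l := by
  induction t generalizing l with
  | nil => simp [levels] at h
  | cons a t ih =>
    cases a with
    | true => simp [levels] at h; omega
    | false =>
      simp only [levels] at h
      exact le_trans (ih (l - 1) h) (Nat.sub_le l 1)

lemma wchain_mono {w : List ℕ} {l l' : ℕ} (h : WChain w l) (hl : l ≤ l') : WChain w l' := by
  cases w with
  | nil => trivial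
  | cons x xs => exact ⟨le_trans h.1 hl, h.2⟩

lemma levels_wchain (t : List Bool) (l : ℕ) : WChain (levels t l) l := by
  induction t generalizing l with
  | nil => trivial
  | cons a t ih =>
    cases a with
    | true => exact ⟨le_refl l, ih (l + 1)⟩
    | false => exact wchain_mono (ih (l - 1)) (Nat.sub_le l 1)

lemma levels_replicate_append (k : ℕ) (t : List Bool) (l : ℕ) :
    levels (List.replicate k false ++ t) l = levels t (l - k) := by
  induction k generalizing l with
  | zero => simp
  | succ k ih =>
    rw [List.replicate_succ, List.cons_append]
    rw [levels, ih]
    congr 1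
    omega

lemma levels_replicate (k l : ℕ) : levels (List.replicate k false) l = [] := by
  have := levels_replicate_append k [] l
  simpa [levels] using this

lemma levels_build {w : List ℕ} {l : ℕ} (h : WChain w l) : levels (build w l) l = w := by
  induction w generalizing l with
  | nil => exact levels_replicate _ _
  | cons x xs ih =>
    obtain ⟨h1, h2⟩ := h
    rw [build, levels_replicate_append]
    have : l - (l - x) = x := by omega
    rw [this, levels, ih h2]

lemma ok_replicate_append {k l : ℕ} (t : List Bool) (hk : k ≤ l) (h : Ok t (l - k)) :
    Ok (List.replicate k false ++ t) l := by
  induction k generalizing l with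
  | zero => simpa using h
  | succ k ih =>
    rw [List.replicate_succ]
    show Ok (false :: _) l
    refine ⟨by omega, ih (by omega) ?_⟩
    have : l - 1 - k = l - (k + 1) := by omega
    rw [this]; exact h

lemma ok_build {w : List ℕ} {l : ℕ} (h : WChain w l) : Ok (build w l) l := by
  induction w generalizing l with
  | nil =>
    rw [build]
    simpa using ok_replicate_append [] (Nat.sub_le l 1) trivial
  | cons x xs ih =>
    obtain ⟨h1, h2⟩ := h
    refine ok_replicate_append _ (Nat.sub_le l x) ?_
    have : l - (l - x) = x := by omega
    rw [this]
    show Ok (true :: _) x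
    exact ih h2

lemma build_length {w : List ℕ} {l : ℕ} (hl : 1 ≤ l) (h : WChain w l) :
    (build w l).length = l - 1 + 2 * w.length := by
  induction w generalizing l with
  | nil => simp [build]
  | cons x xs ih =>
    obtain ⟨h1, h2⟩ := h
    rw [build]
    simp only [List.length_append, List.length_replicate, List.length_cons]
    rw [ih (by omega) h2]
    omega

lemma ok_endLevel_count {t : List Bool} {l : ℕ} (h : Ok t l) :
    endLevel t l + countFalse t = l + countTrue t := by
  induction t generalizing l with
  | nil => simp [endLevel, countTrue_nil, countFalse_nil]
  | cons a t ih =>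
    cases a with
    | true =>
      have h' := ih (l := l + 1) h
      have e : endLevel (true :: t) l = endLevel t (l + 1) := rfl
      rw [e, countTrue_cons, countFalse_cons]
      simp
      omega
    | false =>
      obtain ⟨h1, h2⟩ := h
      have h' := ih (l := l - 1) h2
      have e : endLevel (false :: t) l = endLevel t (l - 1) := rfl
      rw [e, countTrue_cons, countFalse_cons]
      simp
      omega

lemma ok_noTrue {t : List Bool} {l : ℕ} (h : Ok t l) (h0 : countTrue t = 0) :
    t = List.replicate t.length false ∧ t.length ≤ l := by
  induction t generalizing l with
  | nil => exact ⟨rfl, by simp⟩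
  | cons a t ih =>
    cases a with
    | true => simp [countTrue_cons] at h0
    | false =>
      obtain ⟨h1, h2⟩ := h
      have h0' : countTrue t = 0 := by simp [countTrue_cons] at h0; omega
      obtain ⟨e, hle⟩ := ih h2 h0'
      constructor
      · rw [List.length_cons, List.replicate_succ]
        exact congrArg _ e
      · simp only [List.length_cons]; omega

lemma build_levels {t : List Bool} {l : ℕ} (hok : Ok t l) (hend : endLevel t l = 1) :
    build (levels t l) l = t := by
  induction t generalizing l with
  | nil =>
    simp only [endLevel] at hend
    simp [levels, build, hend]
  | cons a t ih =>
    cases a with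
    | true =>
      rw [levels, build]
      have : l - l = 0 := by omega
      rw [this, List.replicate_zero, List.nil_append, ih hok hend]
    | false =>
      obtain ⟨h1, h2⟩ := hok
      rw [levels]
      rcases hw : levels t (l - 1) with _ | ⟨w, ws⟩
      · -- t has no true steps
        have h0 : countTrue t = 0 := by
          have := levels_length t (l - 1); rw [hw] at this; simpa using this.symm
        obtain ⟨e, hle⟩ := ok_noTrue h2 h0
        have hcf : countFalse t = t.length := by
          have := countTrue_add_countFalse t; omega
        have hend' : endLevel t (l - 1) = 1 := hend
        have hend2 := ok_endLevel_count h2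
        rw [hend', h0, hcf] at hend2
        -- l - 1 = 1 + t.length
        rw [build]
        have hlen : l - 1 = t.length + 1 := by omega
        rw [hlen, List.replicate_succ]
        exact congrArg _ e.symm
      · have hwle : w ≤ l - 1 := levels_head_le t (l - 1) hw
        rw [build]
        have : l - w = (l - 1 - w) + 1 := by omega
        rw [this, List.replicate_succ]
        show false :: _ = false :: t
        congr 1
        show build (w :: ws) (l - 1) = t
        rw [← hw, ih h2 hend]


lemma interlace_length {r g : List Bool} (h : r.length = g.length) :
    (interlace r g).length = 2 * r.length := by
  induction r generalizing g with
  | nil => simp [interlace]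
  | cons a as ih =>
    cases g with
    | nil => simp at h
    | cons b bs =>
      simp only [List.length_cons] at *
      show (a :: (!b) :: interlace as bs).length = _
      simp only [List.length_cons]
      rw [ih (by omega)]
      omega

lemma countTrue_interlace {r g : List Bool} (h : r.length = g.length) :
    countTrue (interlace r g) = countTrue r + countFalse g := by
  induction r generalizing g with
  | nil =>
    have hg : g = [] := List.length_eq_zero_iff.mp (by simpa using h.symm)
    subst hg
    simp [interlace, countTrue_nil, countFalse_nil]
  | cons a as ih =>
    cases g with
    | nil => simp at h
    | cons b bs =>
      simp only [List.length_cons] at h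
      show countTrue (a :: (!b) :: interlace as bs) = _
      rw [countTrue_cons, countTrue_cons, countTrue_cons, countFalse_cons,
        ih (by omega)]
      cases a <;> cases b <;> simp only [Bool.false_eq_true, eq_self_iff_true, if_true, if_false, Bool.not_true, Bool.not_false] <;> omega

lemma countFalse_interlace {r g : List Bool} (h : r.length = g.length) :
    countFalse (interlace r g) = countFalse r + countTrue g := by
  induction r generalizing g with
  | nil =>
    have hg : g = [] := List.length_eq_zero_iff.mp (by simpa using h.symm)
    subst hg
    simp [interlace, countTrue_nil, countFalse_nil]
  | cons a as ih =>
    cases g with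
    | nil => simp at h
    | cons b bs =>
      simp only [List.length_cons] at h
      show countFalse (a :: (!b) :: interlace as bs) = _
      rw [countFalse_cons, countFalse_cons, countFalse_cons, countTrue_cons,
        ih (by omega)]
      cases a <;> cases b <;> simp only [Bool.false_eq_true, eq_self_iff_true, if_true, if_false, Bool.not_true, Bool.not_false] <;> omega

lemma splitRG_interlace {r g : List Bool} (h : r.length = g.length) :
    splitRG (interlace r g) = (r, g) := by
  induction r generalizing g with
  | nil =>
    have hg : g = [] := List.length_eq_zero_iff.mp (by simpa using h.symm)
    subst hg
    rfl
  | cons a as ih =>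
    cases g with
    | nil => simp at h
    | cons b bs =>
      simp only [List.length_cons] at h
      show (a :: (splitRG (interlace as bs)).1, (!(!b)) :: (splitRG (interlace as bs)).2) = _
      rw [ih (by omega)]
      simp

lemma interlace_splitRG : ∀ (N : ℕ) (t : List Bool), t.length = 2 * N →
    interlace (splitRG t).1 (splitRG t).2 = t := by
  intro N
  induction N with
  | zero =>
    intro t ht
    rw [List.length_eq_zero_iff] at ht
    subst ht; rfl
  | succ N ih =>
    intro t ht
    match t with
    | a :: b :: rest =>
      have hr : rest.length = 2 * N := by
        simp only [List.length_cons] at ht; omega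
      show interlace (a :: (splitRG rest).1) ((!b) :: (splitRG rest).2) = _
      rw [interlace, ih rest hr]
      simp

lemma splitRG_length : ∀ (N : ℕ) (t : List Bool), t.length = 2 * N →
    (splitRG t).1.length = N ∧ (splitRG t).2.length = N := by
  intro N
  induction N with
  | zero =>
    intro t ht
    rw [List.length_eq_zero_iff] at ht
    subst ht; exact ⟨rfl, rfl⟩
  | succ N ih =>
    intro t ht
    match t with
    | a :: b :: rest =>
      have hr : rest.length = 2 * N := by
        simp only [List.length_cons] at ht; omega
      obtain ⟨e1, e2⟩ := ih rest hr
      constructor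
      · show ((a :: (splitRG rest).1) : List Bool).length = N + 1
        simp [e1]
      · show (((!b) :: (splitRG rest).2) : List Bool).length = N + 1
        simp [e2]

/-- From the reduced-polyomino inequality to `Ok`. -/
lemma isrp_ok : ∀ (r g : List Bool) (c : ℕ), r.length = g.length →
    (∀ i, countTrue (g.take i) ≤ countTrue (r.take i) + c) →
    Ok (interlace r g) (2 * c + 1) := by
  intro r
  induction r with
  | nil => intro g c _ _; trivial
  | cons a as ih =>
    intro g c hlen hcnt
    cases g with
    | nil => simp at hlen
    | cons b bs =>
      simp only [List.length_cons] at hlen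
      have h1 := hcnt 1
      simp only [List.take_succ_cons, List.take_zero] at h1
      rw [countTrue_cons, countTrue_cons, countTrue_nil] at h1
      have hcnt' : ∀ d, (∀ i, countTrue (bs.take i) ≤ countTrue (as.take i) + d) →
          Ok (interlace as bs) (2 * d + 1) := fun d h => ih bs d (by omega) h
      have htail : ∀ i, countTrue (bs.take i) + (if b then 1 else 0) ≤
          countTrue (as.take i) + (if a then 1 else 0) + c := by
        intro i
        have := hcnt (i + 1)
        simp only [List.take_succ_cons] at this
        rw [countTrue_cons, countTrue_cons] at this
        omega
      cases a <;> cases b <;> simp only [Bool.false_eq_true, eq_self_iff_true, if_true, if_false] at h1 htail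
      · -- a = false, b = false : tokens false, true
        show (1 ≤ 2 * c + 1) ∧ Ok (true :: interlace as bs) (2 * c + 1 - 1)
        refine ⟨by omega, ?_⟩
        show Ok (interlace as bs) (2 * c + 1 - 1 + 1)
        have e : 2 * c + 1 - 1 + 1 = 2 * c + 1 := by omega
        rw [e]
        exact hcnt' c (fun i => by have := htail i; omega)
      · -- a = false, b = true : tokens false, false
        show (1 ≤ 2 * c + 1) ∧ Ok (false :: interlace as bs) (2 * c + 1 - 1)
        have hc : 1 ≤ c := by omega
        refine ⟨by omega, by omega, ?_⟩
        show Ok (interlace as bs) (2 * c + 1 - 1 - 1)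
        have e : 2 * c + 1 - 1 - 1 = 2 * (c - 1) + 1 := by omega
        rw [e]
        exact hcnt' (c - 1) (fun i => by have := htail i; omega)
      · -- a = true, b = false : tokens true, true
        show Ok (true :: interlace as bs) (2 * c + 1 + 1)
        show Ok (interlace as bs) (2 * c + 1 + 1 + 1)
        have e : 2 * c + 1 + 1 + 1 = 2 * (c + 1) + 1 := by omega
        rw [e]
        exact hcnt' (c + 1) (fun i => by have := htail i; omega)
      · -- a = true, b = true : tokens true, false
        show Ok (false :: interlace as bs) (2 * c + 1 + 1)
        refine ⟨by omega, ?_⟩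
        show Ok (interlace as bs) (2 * c + 1 + 1 - 1)
        have e : 2 * c + 1 + 1 - 1 = 2 * c + 1 := by omega
        rw [e]
        exact hcnt' c (fun i => by have := htail i; omega)

/-- From `Ok` back to the reduced-polyomino inequality. -/
lemma ok_isrp : ∀ (r g : List Bool) (c : ℕ), r.length = g.length →
    Ok (interlace r g) (2 * c + 1) →
    ∀ i, countTrue (g.take i) ≤ countTrue (r.take i) + c := by
  intro r
  induction r with
  | nil =>
    intro g c hlen _ i
    have hg : g = [] := List.length_eq_zero_iff.mp (by simpa using hlen.symm)
    subst hg
    simp [countTrue_nil]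
  | cons a as ih =>
    intro g c hlen hok i
    cases g with
    | nil => simp at hlen
    | cons b bs =>
      simp only [List.length_cons] at hlen
      cases i with
      | zero => simp [countTrue_nil]
      | succ i =>
        simp only [List.take_succ_cons]
        rw [countTrue_cons, countTrue_cons]
        cases a <;> cases b <;> simp only [Bool.false_eq_true, eq_self_iff_true, if_true, if_false]
        · -- a = false, b = false : tokens false, true
          have hok' : (1 ≤ 2 * c + 1) ∧ Ok (true :: interlace as bs) (2 * c + 1 - 1) := hok
          have hok'' : Ok (interlace as bs) (2 * c + 1 - 1 + 1) := hok'.2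
          have e : 2 * c + 1 - 1 + 1 = 2 * c + 1 := by omega
          rw [e] at hok''
          have := ih bs c (by omega) hok'' i
          omega
        · -- a = false, b = true : tokens false, false
          have hok' : (1 ≤ 2 * c + 1) ∧ (1 ≤ 2 * c + 1 - 1) ∧
              Ok (interlace as bs) (2 * c + 1 - 1 - 1) := hok
          obtain ⟨h1, h2, hok''⟩ := hok'
          have hc : 1 ≤ c := by omega
          have e : 2 * c + 1 - 1 - 1 = 2 * (c - 1) + 1 := by omega
          rw [e] at hok''
          have := ih bs (c - 1) (by omega) hok'' i
          omega
        · -- a = true, b = false : tokens true, true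
          have hok'' : Ok (interlace as bs) (2 * c + 1 + 1 + 1) := hok
          have e : 2 * c + 1 + 1 + 1 = 2 * (c + 1) + 1 := by omega
          rw [e] at hok''
          have := ih bs (c + 1) (by omega) hok'' i
          omega
        · -- a = true, b = true : tokens true, false
          have hok' : (1 ≤ 2 * c + 1 + 1) ∧ Ok (interlace as bs) (2 * c + 1 + 1 - 1) := hok
          have hok'' := hok'.2
          have e : 2 * c + 1 + 1 - 1 = 2 * c + 1 := by omega
          rw [e] at hok''
          have := ih bs c (by omega) hok'' i
          omega

/-- Parity counts: odd letters come from red north steps, even letters from green east steps. -/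
lemma parity_counts : ∀ (r g : List Bool) (c : ℕ), r.length = g.length →
    Ok (interlace r g) (2 * c + 1) →
    (levels (interlace r g) (2 * c + 1)).countP (fun x => x % 2 = 1) = countTrue r ∧
    (levels (interlace r g) (2 * c + 1)).countP (fun x => x % 2 = 0) = countFalse g := by
  intro r
  induction r with
  | nil =>
    intro g c hlen _
    have hg : g = [] := List.length_eq_zero_iff.mp (by simpa using hlen.symm)
    subst hg
    simp [interlace, levels, countTrue_nil, countFalse_nil]
  | cons a as ih =>
    intro g c hlen hok
    cases g with
    | nil => simp at hlen
    | cons b bs =>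
      simp only [List.length_cons] at hlen
      rw [countTrue_cons, countFalse_cons]
      cases a <;> cases b <;> simp only [Bool.false_eq_true, eq_self_iff_true, if_true, if_false]
      · -- a = false, b = false : tokens false, true : record 2c
        have hok' : (1 ≤ 2 * c + 1) ∧ Ok (true :: interlace as bs) (2 * c + 1 - 1) := hok
        have hok'' : Ok (interlace as bs) (2 * c + 1 - 1 + 1) := hok'.2
        have e : 2 * c + 1 - 1 + 1 = 2 * c + 1 := by omega
        rw [e] at hok''
        have hlev : levels (interlace (false :: as) (false :: bs)) (2 * c + 1) =
            (2 * c + 1 - 1) :: levels (interlace as bs) (2 * c + 1) := by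
          show levels (false :: true :: interlace as bs) (2 * c + 1) = _
          rw [levels, levels, e]
        rw [hlev]
        obtain ⟨e1, e2⟩ := ih bs c (by omega) hok''
        refine ⟨?_, ?_⟩ <;>
          simp only [List.countP_cons, decide_eq_true_eq, e1, e2] <;>
          split_ifs <;> omega
      · -- a = false, b = true : tokens false, false : no record
        have hok' : (1 ≤ 2 * c + 1) ∧ (1 ≤ 2 * c + 1 - 1) ∧
            Ok (interlace as bs) (2 * c + 1 - 1 - 1) := hok
        obtain ⟨h1, h2, hok''⟩ := hok'
        have hc : 1 ≤ c := by omega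
        have e : 2 * c + 1 - 1 - 1 = 2 * (c - 1) + 1 := by omega
        rw [e] at hok''
        have hlev : levels (interlace (false :: as) (true :: bs)) (2 * c + 1) =
            levels (interlace as bs) (2 * (c - 1) + 1) := by
          show levels (false :: false :: interlace as bs) (2 * c + 1) = _
          rw [levels, levels, e]
        rw [hlev]
        obtain ⟨e1, e2⟩ := ih bs (c - 1) (by omega) hok''
        exact ⟨by rw [e1]; omega, by rw [e2]; omega⟩
      · -- a = true, b = false : tokens true, true : records 2c+1, 2c+2
        have hok'' : Ok (interlace as bs) (2 * c + 1 + 1 + 1) := hok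
        have e : 2 * c + 1 + 1 + 1 = 2 * (c + 1) + 1 := by omega
        rw [e] at hok''
        have hlev : levels (interlace (true :: as) (false :: bs)) (2 * c + 1) =
            (2 * c + 1) :: (2 * c + 1 + 1) :: levels (interlace as bs) (2 * (c + 1) + 1) := by
          show levels (true :: true :: interlace as bs) (2 * c + 1) = _
          rw [levels, levels, e]
        rw [hlev]
        obtain ⟨e1, e2⟩ := ih bs (c + 1) (by omega) hok''
        refine ⟨?_, ?_⟩ <;>
          simp only [List.countP_cons, decide_eq_true_eq, e1, e2] <;>
          split_ifs <;> omega
      · -- a = true, b = true : tokens true, false : records 2c+1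
        have hok' : (1 ≤ 2 * c + 1 + 1) ∧ Ok (interlace as bs) (2 * c + 1 + 1 - 1) := hok
        have hok'' := hok'.2
        have e : 2 * c + 1 + 1 - 1 = 2 * c + 1 := by omega
        rw [e] at hok''
        have hlev : levels (interlace (true :: as) (true :: bs)) (2 * c + 1) =
            (2 * c + 1) :: levels (interlace as bs) (2 * c + 1) := by
          show levels (true :: false :: interlace as bs) (2 * c + 1) = _
          rw [levels, levels, e]
        rw [hlev]
        obtain ⟨e1, e2⟩ := ih bs c (by omega) hok''
        refine ⟨?_, ?_⟩ <;>
          simp only [List.countP_cons, decide_eq_true_eq, e1, e2] <;>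
          split_ifs <;> omega


lemma getD_ofFn {α : Type*} {N : ℕ} (f : Fin N → α) (i : ℕ) (d : α) (h : i < N) :
    (List.ofFn f).getD i d = f ⟨i, h⟩ := by
  rw [List.getD_eq_getElem _ _ (by simpa using h)]
  simp

lemma getD_ofFn' {α : Type*} {N : ℕ} (f : Fin N → α) (i : ℕ) (d : α) (h : ¬ i < N) :
    (List.ofFn f).getD i d = d := by
  apply List.getD_eq_default
  simpa using Nat.le_of_not_lt h

lemma ofFn_getD {α : Type*} {N : ℕ} (l : List α) (d : α) (h : l.length = N) :
    List.ofFn (fun i : Fin N => l.getD i.val d) = l := by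
  subst h
  apply List.ext_getElem
  · simp
  · intro i h1 h2
    simp only [List.getElem_ofFn]
    rw [List.getD_eq_getElem]

lemma wchain_getD_zero {w : List ℕ} {l : ℕ} (h : WChain w l) (hw : 0 < w.length) :
    w.getD 0 0 ≤ l := by
  cases w with
  | nil => simp at hw
  | cons x xs => exact h.1

lemma wchain_getD_succ {w : List ℕ} {l i : ℕ} (h : WChain w l) (hi : i + 1 < w.length) :
    w.getD (i + 1) 0 ≤ w.getD i 0 + 1 := by
  induction w generalizing l i with
  | nil => simp at hi
  | cons x xs ih =>
    obtain ⟨h1, h2⟩ := h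
    cases i with
    | zero =>
      rw [List.getD_cons_succ, List.getD_cons_zero]
      exact wchain_getD_zero h2 (by simpa using hi)
    | succ i =>
      rw [List.getD_cons_succ, List.getD_cons_succ]
      exact ih h2 (by simpa using hi)

lemma wchain_of_getD {w : List ℕ} {l : ℕ} (h0 : 0 < w.length → w.getD 0 0 ≤ l)
    (hs : ∀ i, i + 1 < w.length → w.getD (i + 1) 0 ≤ w.getD i 0 + 1) :
    WChain w l := by
  induction w generalizing l with
  | nil => trivial
  | cons x xs ih =>
    refine ⟨by simpa using h0 (by simp), ?_⟩
    apply ih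
    · intro hx
      have := hs 0 (by simpa using hx)
      simpa using this
    · intro i hi
      have := hs (i + 1) (by simpa using hi)
      simpa using this

lemma countP_eq_card_filter_range {α : Type*} (l : List α) (p : α → Prop) [DecidablePred p]
    (d : α) :
    l.countP (fun x => decide (p x)) =
      ((Finset.range l.length).filter (fun i => p (l.getD i d))).card := by
  induction l with
  | nil => simp
  | cons x xs ih =>
    rw [List.countP_cons, Finset.card_filter, List.length_cons]
    rw [Finset.sum_range_succ']
    simp only [List.getD_cons_succ, List.getD_cons_zero]
    rw [← Finset.card_filter, ← ih]
    simp only [decide_eq_true_eq]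


/-! ### Decoration shifting. -/

def shiftDown {N : ℕ} (D : Finset (Fin (N + 1))) : Finset (Fin N) :=
  Finset.univ.filter fun i : Fin N => (⟨i.val + 1, Nat.succ_lt_succ i.isLt⟩ : Fin (N + 1)) ∈ D

def shiftUp {N : ℕ} (D : Finset (Fin N)) : Finset (Fin (N + 1)) :=
  Finset.univ.filter fun j : Fin (N + 1) => ∃ i ∈ D, j.val = i.val + 1

lemma mem_shiftDown {N : ℕ} {D : Finset (Fin (N + 1))} {i : Fin N} :
    i ∈ shiftDown D ↔ (⟨i.val + 1, Nat.succ_lt_succ i.isLt⟩ : Fin (N + 1)) ∈ D := by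
  simp [shiftDown]

lemma mem_shiftUp {N : ℕ} {D : Finset (Fin N)} {j : Fin (N + 1)} :
    j ∈ shiftUp D ↔ ∃ i ∈ D, j.val = i.val + 1 := by
  simp [shiftUp]

lemma shiftDown_shiftUp {N : ℕ} (D : Finset (Fin N)) : shiftDown (shiftUp D) = D := by
  ext i
  rw [mem_shiftDown, mem_shiftUp]
  constructor
  · rintro ⟨i', hi', he⟩
    simp only at he
    have : i = i' := Fin.ext (by omega)
    rwa [this]
  · intro hi
    exact ⟨i, hi, rfl⟩

lemma shiftUp_shiftDown {N : ℕ} (D : Finset (Fin (N + 1))) (h : ∀ j ∈ D, 1 ≤ j.val) :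
    shiftUp (shiftDown D) = D := by
  ext j
  rw [mem_shiftUp]
  constructor
  · rintro ⟨i, hi, he⟩
    rw [mem_shiftDown] at hi
    have : j = ⟨i.val + 1, Nat.succ_lt_succ i.isLt⟩ := Fin.ext he
    rwa [this]
  · intro hj
    have h1 := h j hj
    have hlt : j.val - 1 < N := by omega
    refine ⟨⟨j.val - 1, hlt⟩, ?_, by simp; omega⟩
    rw [mem_shiftDown]
    have : (⟨j.val - 1 + 1, Nat.succ_lt_succ hlt⟩ : Fin (N + 1)) = j := Fin.ext (by simp; omega)
    rwa [this]

lemma shiftUp_eq_image {N : ℕ} (D : Finset (Fin N)) :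
    shiftUp D = D.image (fun i : Fin N => (⟨i.val + 1, Nat.succ_lt_succ i.isLt⟩ : Fin (N + 1))) := by
  ext j
  rw [mem_shiftUp, Finset.mem_image]
  constructor
  · rintro ⟨i, hi, he⟩
    exact ⟨i, hi, Fin.ext (by simp; omega)⟩
  · rintro ⟨i, hi, rfl⟩
    exact ⟨i, hi, rfl⟩

lemma card_shiftUp {N : ℕ} (D : Finset (Fin N)) : (shiftUp D).card = D.card := by
  rw [shiftUp_eq_image]
  apply Finset.card_image_of_injective
  intro a b hab
  have := congrArg Fin.val hab
  simp only at this
  exact Fin.ext (by omega)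

lemma card_shiftDown {N : ℕ} (D : Finset (Fin (N + 1))) (h : ∀ j ∈ D, 1 ≤ j.val) :
    (shiftDown D).card = D.card := by
  rw [← shiftUp_shiftDown D h, shiftDown_shiftUp, card_shiftUp]

/-! ### The two maps (on carriers). -/

def fwdC {N : ℕ} (P : RPolyCarrier N) : PFCarrier N :=
  (fun i => (if (levels (interlace (RRl P) (RGl P)) 1).getD i.val 0 % 2 = 1 then 1 else 2,
             rval ((levels (interlace (RRl P) (RGl P)) 1).getD i.val 0)),
   shiftDown P.2)

def wOf {N : ℕ} (Q : PFCarrier N) : List ℕ :=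
  List.ofFn fun i : Fin N => 2 * (Q.1 i).2 + (if (Q.1 i).1 = 1 then 1 else 0)

def bwdC {N : ℕ} (Q : PFCarrier N) : RPolyCarrier N :=
  ((fun i => (splitRG (build (wOf Q) 1)).1.getD i.val false,
    fun i => (splitRG (build (wOf Q) 1)).2.getD i.val false),
   shiftUp Q.2)

lemma count_eq_card_filter_range (l : List ℕ) (a : ℕ) :
    l.count a = ((Finset.range l.length).filter (fun i => l.getD i 0 = a)).card := by
  induction l with
  | nil => simp
  | cons x xs ih =>
    rw [List.count_cons, Finset.card_filter, List.length_cons, Finset.sum_range_succ']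
    simp only [List.getD_cons_succ, List.getD_cons_zero]
    rw [← Finset.card_filter, ← ih]
    simp only [beq_iff_eq]

/-- All the basic facts about a reduced polyomino. -/
lemma rp_facts {m n : ℕ} (r' g' : List Bool) (h : IsRPolyo m n r' g') :
    Ok (interlace r' g') 1 ∧
    (levels (interlace r' g') 1).length = m + n ∧
    (levels (interlace r' g') 1).countP (fun x => x % 2 = 1) = n ∧
    (levels (interlace r' g') 1).countP (fun x => x % 2 = 0) = m ∧
    build (levels (interlace r' g') 1) 1 = interlace r' g' ∧
    splitRG (interlace r' g') = (r', g') := by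
  obtain ⟨hlr, hlg, hctr, hctg, hineq⟩ := h
  have hlen : r'.length = g'.length := by omega
  have hcfg : countFalse g' = m := by
    have := countTrue_add_countFalse g'; omega
  have hcfr : countFalse r' = m := by
    have := countTrue_add_countFalse r'; omega
  have hok : Ok (interlace r' g') 1 := by
    have := isrp_ok r' g' 0 hlen (fun i => by have := hineq i; omega)
    simpa using this
  have hct : countTrue (interlace r' g') = n + m := by
    rw [countTrue_interlace hlen, hctr, hcfg]
  have hcf : countFalse (interlace r' g') = m + n := by
    rw [countFalse_interlace hlen, hcfr, hctg]
  have hlevlen : (levels (interlace r' g') 1).length = m + n := by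
    rw [levels_length, hct]; omega
  have hend : endLevel (interlace r' g') 1 = 1 := by
    have := ok_endLevel_count hok
    rw [hct, hcf] at this
    omega
  have hparity := parity_counts r' g' 0 hlen (by simpa using hok)
  simp only [Nat.mul_zero, Nat.zero_add] at hparity
  refine ⟨hok, hlevlen, by rw [hparity.1, hctr], by rw [hparity.2, hcfg],
    build_levels hok hend, splitRG_interlace hlen⟩


section Fwd

variable {m n : ℕ} (P : RPolyCarrier (m + n))

lemma fwd_a_getD {i : ℕ} (hi : i < m + n) :
    (PFa (fwdC P)).getD i 0 =
      if (levels (interlace (RRl P) (RGl P)) 1).getD i 0 % 2 = 1 then 1 else 2 := by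
  simp only [PFa]
  rw [getD_ofFn _ _ _ hi]
  rfl

lemma fwd_b_getD {i : ℕ} (hi : i < m + n) :
    (PFb (fwdC P)).getD i 0 = rval ((levels (interlace (RRl P) (RGl P)) 1).getD i 0) := by
  simp only [PFb]
  rw [getD_ofFn _ _ _ hi]
  rfl

lemma fwd_a_length : (PFa (fwdC P)).length = m + n := by simp [PFa]
lemma fwd_b_length : (PFb (fwdC P)).length = m + n := by simp [PFb]

lemma fwd_mem {r k : ℕ}
    (h1 : IsRPolyo m n (RRl P) (RGl P))
    (h2 : (areaWordR (RRl P) (RGl P)).count 0 = r)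
    (h3 : ∀ j ∈ P.2, 1 ≤ j.val ∧ (areaWordR (RRl P) (RGl P)).getD (j.val - 1) 0 % 2 = 1 ∧
        (areaWordR (RRl P) (RGl P)).getD j.val 0 =
          (areaWordR (RRl P) (RGl P)).getD (j.val - 1) 0 + 1)
    (h4 : P.2.card = k) :
    IsParkingData (PFa (fwdC P)) (PFb (fwdC P)) ∧
    (∀ i : Fin (m + n), ((fwdC P).1 i).1 = 1 ∨ ((fwdC P).1 i).1 = 2) ∧
      (PFa (fwdC P)).count 1 = n ∧ (PFa (fwdC P)).count 2 = m ∧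
      ((Finset.range (m + n)).filter fun i =>
        (PFb (fwdC P)).getD i 0 = 0 ∧ (PFa (fwdC P)).getD i 0 = 2).card = r - 1 ∧
      (∀ j ∈ (fwdC P).2, 1 ≤ j.val ∧
        (PFb (fwdC P)).getD j.val 0 = (PFb (fwdC P)).getD (j.val - 1) 0 + 1) ∧
      (fwdC P).2.card = k := by
  set lev := levels (interlace (RRl P) (RGl P)) 1 with hlevdef
  obtain ⟨hok, hlen, hodd, heven, hbuild, hsplit⟩ := rp_facts (RRl P) (RGl P) h1
  rw [← hlevdef] at hlen hodd heven hbuild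
  have hchain : WChain lev 1 := levels_wchain _ _
  have hword : areaWordR (RRl P) (RGl P) = 0 :: lev := rfl
  refine ⟨⟨?_, ?_⟩, ?_, ?_, ?_, ?_, ?_, ?_⟩
  · -- b starts at 0
    by_cases h0 : 0 < m + n
    · rw [fwd_b_getD P h0, ← hlevdef]
      have := wchain_getD_zero hchain (by omega)
      unfold rval
      omega
    · rw [List.getD_eq_default]
      rw [fwd_b_length]
      omega
  · -- parking condition
    intro i hi
    rw [fwd_b_length] at hi
    have hi1 : i < m + n := by omega
    rw [fwd_b_getD P hi, fwd_b_getD P hi1, ← hlevdef]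
    have hch := wchain_getD_succ hchain (by omega : i + 1 < lev.length)
    constructor
    · unfold rval; omega
    · intro heq
      unfold rval at heq
      have hoddi : lev.getD i 0 % 2 = 1 ∧ lev.getD (i + 1) 0 = lev.getD i 0 + 1 := by omega
      rw [fwd_a_getD P hi, fwd_a_getD P hi1, ← hlevdef]
      rw [if_pos hoddi.1, if_neg (by omega)]
      omega
  · -- labels in {1, 2}
    intro i
    show (if _ then 1 else 2) = 1 ∨ (if _ then 1 else 2) = 2
    split_ifs <;> simp
  · -- count of 1s
    rw [count_eq_card_filter_range, fwd_a_length]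
    have hcg : ∀ i ∈ Finset.range (m + n),
        ((PFa (fwdC P)).getD i 0 = 1 ↔ lev.getD i 0 % 2 = 1) := by
      intro i hi
      rw [Finset.mem_range] at hi
      rw [fwd_a_getD P hi, ← hlevdef]
      split_ifs with h
      · exact iff_of_true rfl h
      · exact iff_of_false (by omega) h
    rw [Finset.filter_congr hcg]
    have := countP_eq_card_filter_range lev (fun x => x % 2 = 1) 0
    rw [hlen] at this
    rw [← this, hodd]
  · -- count of 2s
    rw [count_eq_card_filter_range, fwd_a_length]
    have hcg : ∀ i ∈ Finset.range (m + n),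
        ((PFa (fwdC P)).getD i 0 = 2 ↔ lev.getD i 0 % 2 = 0) := by
      intro i hi
      rw [Finset.mem_range] at hi
      rw [fwd_a_getD P hi, ← hlevdef]
      split_ifs with h
      · exact iff_of_false (by omega) (by omega)
      · exact iff_of_true rfl (by omega)
    rw [Finset.filter_congr hcg]
    have := countP_eq_card_filter_range lev (fun x => x % 2 = 0) 0
    rw [hlen] at this
    rw [← this, heven]
  · -- r - 1 zeros on the diagonal
    have hc : lev.count 0 = r - 1 := by
      rw [hword] at h2
      rw [List.count_cons] at h2
      simp at h2
      omega
    rw [← hc, count_eq_card_filter_range, hlen]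
    congr 1
    apply Finset.filter_congr
    intro i hi
    rw [Finset.mem_range] at hi
    rw [fwd_a_getD P hi, fwd_b_getD P hi, ← hlevdef]
    unfold rval
    split_ifs with h <;> constructor <;> intro hh <;> omega
  · -- decorations
    intro j hj
    have hj' := mem_shiftDown.mp hj
    obtain ⟨hge, hpar, hsucc⟩ := h3 _ hj'
    simp only at hpar hsucc
    rw [hword] at hpar hsucc
    have hjv : 1 ≤ j.val := by
      by_contra hc
      have : j.val = 0 := by omega
      rw [this] at hpar
      simp only [Nat.add_sub_cancel, List.getD_cons_zero] at hpar
      -- hpar : (0 :: lev).getD (1 - 1) 0 % 2 = 1, i.e. 0 % 2 = 1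
      omega
    refine ⟨hjv, ?_⟩
    obtain ⟨jv, hjveq⟩ : ∃ jv, j.val = jv + 1 := ⟨j.val - 1, by omega⟩
    have hlt2 : jv + 1 < m + n := by have := j.isLt; omega
    have e1 : (0 :: lev).getD (j.val + 1 - 1) 0 = lev.getD jv 0 := by
      rw [hjveq]; rfl
    have e2 : (0 :: lev).getD (j.val + 1) 0 = lev.getD (jv + 1) 0 := by
      rw [hjveq]; rfl
    rw [e1] at hpar
    rw [e1, e2] at hsucc
    rw [hjveq]
    rw [fwd_b_getD P hlt2, ← hlevdef]
    have e3 : jv + 1 - 1 = jv := by omega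
    rw [e3, fwd_b_getD P (by omega : jv < m + n), ← hlevdef]
    unfold rval
    omega
  · -- cardinality
    show (shiftDown P.2).card = k
    rw [card_shiftDown P.2 (fun j hj => (h3 j hj).1), h4]

end Fwd


section Bwd

variable {m n : ℕ} (Q : PFCarrier (m + n))

lemma pf_a_length : (PFa Q).length = m + n := by simp [PFa]
lemma pf_b_length : (PFb Q).length = m + n := by simp [PFb]
lemma w_length : (wOf Q).length = m + n := by simp [wOf]

lemma w_getD2 {i : ℕ} (hi : i < m + n) :
    (wOf Q).getD i 0 = 2 * (PFb Q).getD i 0 + (if (PFa Q).getD i 0 = 1 then 1 else 0) := by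
  have e1 : (wOf Q).getD i 0 = 2 * (Q.1 ⟨i, hi⟩).2 + (if (Q.1 ⟨i, hi⟩).1 = 1 then 1 else 0) := by
    simp only [wOf]; exact getD_ofFn _ _ _ hi
  have e2 : (PFb Q).getD i 0 = (Q.1 ⟨i, hi⟩).2 := by
    simp only [PFb]; exact getD_ofFn _ _ _ hi
  have e3 : (PFa Q).getD i 0 = (Q.1 ⟨i, hi⟩).1 := by
    simp only [PFa]; exact getD_ofFn _ _ _ hi
  rw [e1, e2]
  simp only [e3]

lemma labels2 (h2 : ∀ i : Fin (m + n), (Q.1 i).1 = 1 ∨ (Q.1 i).1 = 2) {i : ℕ}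
    (hi : i < m + n) : (PFa Q).getD i 0 = 1 ∨ (PFa Q).getD i 0 = 2 := by
  simp only [PFa]
  rw [getD_ofFn _ _ _ hi]
  exact h2 _

/-- ite-free description of the letters of `wOf`. -/
lemma w_val_eq {i : ℕ} (hi : i < m + n) :
    ((PFa Q).getD i 0 = 1 → (wOf Q).getD i 0 = 2 * (PFb Q).getD i 0 + 1) ∧
    ((PFa Q).getD i 0 = 2 → (wOf Q).getD i 0 = 2 * (PFb Q).getD i 0) := by
  rw [w_getD2 Q hi]
  constructor
  · intro h; rw [if_pos h]
  · intro h; rw [if_neg (by omega)]; omega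

lemma bwd_wchain (h1 : IsParkingData (PFa Q) (PFb Q))
    (h2 : ∀ i : Fin (m + n), (Q.1 i).1 = 1 ∨ (Q.1 i).1 = 2) : WChain (wOf Q) 1 := by
  apply wchain_of_getD
  · intro h0
    rw [w_length] at h0
    have hb0 := h1.1
    rcases labels2 Q h2 h0 with h | h
    · have := (w_val_eq Q h0).1 h; omega
    · have := (w_val_eq Q h0).2 h; omega
  · intro i hi
    rw [w_length] at hi
    have hi0 : i < m + n := by omega
    obtain ⟨hle, himp⟩ := h1.2 i (by rw [pf_b_length]; omega)
    by_cases hbe : (PFb Q).getD (i + 1) 0 = (PFb Q).getD i 0 + 1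
    · have hlt := himp hbe
      rcases labels2 Q h2 hi0 with h | h <;> rcases labels2 Q h2 hi with h' | h'
      · omega
      · have e1 := (w_val_eq Q hi0).1 h
        have e2 := (w_val_eq Q hi).2 h'
        omega
      · omega
      · omega
    · rcases labels2 Q h2 hi0 with h | h <;> rcases labels2 Q h2 hi with h' | h' <;>
      [ (have e1 := (w_val_eq Q hi0).1 h; have e2 := (w_val_eq Q hi).1 h');
        (have e1 := (w_val_eq Q hi0).1 h; have e2 := (w_val_eq Q hi).2 h');
        (have e1 := (w_val_eq Q hi0).2 h; have e2 := (w_val_eq Q hi).1 h');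
        (have e1 := (w_val_eq Q hi0).2 h; have e2 := (w_val_eq Q hi).2 h')] <;>
      omega

/-- Basic facts about the reconstructed polyomino. -/
lemma bwd_facts (h1 : IsParkingData (PFa Q) (PFb Q))
    (h2 : ∀ i : Fin (m + n), (Q.1 i).1 = 1 ∨ (Q.1 i).1 = 2) :
    levels (build (wOf Q) 1) 1 = wOf Q ∧
    (build (wOf Q) 1).length = 2 * (m + n) ∧
    Ok (build (wOf Q) 1) 1 ∧
    RRl (bwdC Q) = (splitRG (build (wOf Q) 1)).1 ∧
    RGl (bwdC Q) = (splitRG (build (wOf Q) 1)).2 ∧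
    (RRl (bwdC Q)).length = m + n ∧ (RGl (bwdC Q)).length = m + n ∧
    interlace (RRl (bwdC Q)) (RGl (bwdC Q)) = build (wOf Q) 1 ∧
    areaWordR (RRl (bwdC Q)) (RGl (bwdC Q)) = 0 :: wOf Q := by
  have hch := bwd_wchain Q h1 h2
  have hlev : levels (build (wOf Q) 1) 1 = wOf Q := levels_build hch
  have hlen : (build (wOf Q) 1).length = 2 * (m + n) := by
    rw [build_length (le_refl 1) hch, w_length]
    omega
  have hok : Ok (build (wOf Q) 1) 1 := ok_build hch
  obtain ⟨hs1, hs2⟩ := splitRG_length (m + n) _ hlen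
  have hr' : RRl (bwdC Q) = (splitRG (build (wOf Q) 1)).1 := by
    show List.ofFn _ = _
    exact ofFn_getD _ false hs1
  have hg' : RGl (bwdC Q) = (splitRG (build (wOf Q) 1)).2 := by
    show List.ofFn _ = _
    exact ofFn_getD _ false hs2
  have hint : interlace (RRl (bwdC Q)) (RGl (bwdC Q)) = build (wOf Q) 1 := by
    rw [hr', hg']
    exact interlace_splitRG (m + n) _ hlen
  refine ⟨hlev, hlen, hok, hr', hg', by rw [hr', hs1], by rw [hg', hs2], hint, ?_⟩
  rw [areaWordR, hint, hlev]

lemma bwd_mem {r k : ℕ} (hr : 1 ≤ r)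
    (h1 : IsParkingData (PFa Q) (PFb Q))
    (h2 : ∀ i : Fin (m + n), (Q.1 i).1 = 1 ∨ (Q.1 i).1 = 2)
    (h3 : (PFa Q).count 1 = n)
    (h4 : (PFa Q).count 2 = m)
    (h5 : ((Finset.range (m + n)).filter fun i =>
        (PFb Q).getD i 0 = 0 ∧ (PFa Q).getD i 0 = 2).card = r - 1)
    (h6 : ∀ j ∈ Q.2, 1 ≤ j.val ∧
        (PFb Q).getD j.val 0 = (PFb Q).getD (j.val - 1) 0 + 1)
    (h7 : Q.2.card = k) :
    IsRPolyo m n (RRl (bwdC Q)) (RGl (bwdC Q)) ∧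
      (areaWordR (RRl (bwdC Q)) (RGl (bwdC Q))).count 0 = r ∧
      (∀ j ∈ (bwdC Q).2, 1 ≤ j.val ∧
        (areaWordR (RRl (bwdC Q)) (RGl (bwdC Q))).getD (j.val - 1) 0 % 2 = 1 ∧
        (areaWordR (RRl (bwdC Q)) (RGl (bwdC Q))).getD j.val 0 =
          (areaWordR (RRl (bwdC Q)) (RGl (bwdC Q))).getD (j.val - 1) 0 + 1) ∧
      (bwdC Q).2.card = k := by
  obtain ⟨hlev, hlen, hok, hr', hg', hlr, hlg, hint, hword⟩ := bwd_facts Q h1 h2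
  have hch := bwd_wchain Q h1 h2
  have hok' : Ok (interlace (RRl (bwdC Q)) (RGl (bwdC Q))) (2 * 0 + 1) := by
    rw [hint]; simpa using hok
  have hpar := parity_counts _ _ 0 (by omega) hok'
  rw [hint] at hpar
  simp only [Nat.mul_zero, Nat.zero_add] at hpar
  rw [hlev] at hpar
  -- odd letters = labels 1
  have hcodd : (wOf Q).countP (fun x => x % 2 = 1) = n := by
    have e1 := countP_eq_card_filter_range (wOf Q) (fun x => x % 2 = 1) 0
    rw [w_length] at e1
    have e2 := count_eq_card_filter_range (PFa Q) 1
    rw [pf_a_length] at e2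
    have e3 : (Finset.range (m + n)).filter (fun i => (wOf Q).getD i 0 % 2 = 1) =
        (Finset.range (m + n)).filter (fun i => (PFa Q).getD i 0 = 1) := by
      apply Finset.filter_congr
      intro i hi
      rw [Finset.mem_range] at hi
      rcases labels2 Q h2 hi with h | h
      · exact iff_of_true (by have := (w_val_eq Q hi).1 h; omega) h
      · exact iff_of_false (by have := (w_val_eq Q hi).2 h; omega) (by omega)
    rw [e1, e3, ← e2, h3]
  have hceven : (wOf Q).countP (fun x => x % 2 = 0) = m := by
    have e1 := countP_eq_card_filter_range (wOf Q) (fun x => x % 2 = 0) 0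
    rw [w_length] at e1
    have e2 := count_eq_card_filter_range (PFa Q) 2
    rw [pf_a_length] at e2
    have e3 : (Finset.range (m + n)).filter (fun i => (wOf Q).getD i 0 % 2 = 0) =
        (Finset.range (m + n)).filter (fun i => (PFa Q).getD i 0 = 2) := by
      apply Finset.filter_congr
      intro i hi
      rw [Finset.mem_range] at hi
      rcases labels2 Q h2 hi with h | h
      · exact iff_of_false (by have := (w_val_eq Q hi).1 h; omega) (by omega)
      · exact iff_of_true (by have := (w_val_eq Q hi).2 h; omega) h
    rw [e1, e3, ← e2, h4]
  have hctr : countTrue (RRl (bwdC Q)) = n := by rw [← hpar.1, hcodd]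
  have hcfg : countFalse (RGl (bwdC Q)) = m := by rw [← hpar.2, hceven]
  have hctg : countTrue (RGl (bwdC Q)) = n := by
    have := countTrue_add_countFalse (RGl (bwdC Q))
    omega
  refine ⟨⟨hlr, hlg, hctr, hctg, ?_⟩, ?_, ?_, ?_⟩
  · -- the inequality
    intro i
    have := ok_isrp (RRl (bwdC Q)) (RGl (bwdC Q)) 0 (by omega) hok' i
    omega
  · -- count of zeros
    rw [hword, List.count_cons]
    have hc0 : (wOf Q).count 0 = r - 1 := by
      have e1 := count_eq_card_filter_range (wOf Q) 0
      rw [w_length] at e1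
      have e3 : (Finset.range (m + n)).filter (fun i => (wOf Q).getD i 0 = 0) =
          (Finset.range (m + n)).filter (fun i =>
            (PFb Q).getD i 0 = 0 ∧ (PFa Q).getD i 0 = 2) := by
        apply Finset.filter_congr
        intro i hi
        rw [Finset.mem_range] at hi
        rcases labels2 Q h2 hi with h | h
        · have := (w_val_eq Q hi).1 h
          exact iff_of_false (by omega) (by omega)
        · have := (w_val_eq Q hi).2 h
          constructor
          · intro hw; exact ⟨by omega, h⟩
          · rintro ⟨hb, -⟩; omega
      rw [e1, e3, h5]
    rw [hc0]
    simp
    omega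
  · -- decorations
    intro j hj
    obtain ⟨i, hi, hji⟩ := mem_shiftUp.mp hj
    obtain ⟨hi1, hib⟩ := h6 i hi
    have hjv : 1 ≤ j.val := by omega
    obtain ⟨iv, hiveq⟩ : ∃ iv, i.val = iv + 1 := ⟨i.val - 1, by omega⟩
    have hivlt : iv + 1 < m + n := by have := i.isLt; omega
    have e1 : (0 :: wOf Q).getD (j.val - 1) 0 = (wOf Q).getD iv 0 := by
      rw [hji, hiveq]; rfl
    have e2 : (0 :: wOf Q).getD j.val 0 = (wOf Q).getD (iv + 1) 0 := by
      rw [hji, hiveq]; rfl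
    rw [hiveq] at hib
    have e3 : iv + 1 - 1 = iv := by omega
    rw [e3] at hib
    -- from the rise in `b`, deduce the rise in `w`
    have hchn := wchain_getD_succ hch (by rw [w_length]; omega : iv + 1 < (wOf Q).length)
    have key : (wOf Q).getD iv 0 % 2 = 1 ∧
        (wOf Q).getD (iv + 1) 0 = (wOf Q).getD iv 0 + 1 := by
      rcases labels2 Q h2 (by omega : iv < m + n) with h | h <;>
        rcases labels2 Q h2 hivlt with h' | h'
      · have f1 := (w_val_eq Q (by omega : iv < m + n)).1 h
        have f2 := (w_val_eq Q hivlt).1 h'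
        omega
      · have f1 := (w_val_eq Q (by omega : iv < m + n)).1 h
        have f2 := (w_val_eq Q hivlt).2 h'
        omega
      · have f1 := (w_val_eq Q (by omega : iv < m + n)).2 h
        have f2 := (w_val_eq Q hivlt).1 h'
        omega
      · have f1 := (w_val_eq Q (by omega : iv < m + n)).2 h
        have f2 := (w_val_eq Q hivlt).2 h'
        omega
    rw [hword]
    rw [e1, e2]
    exact ⟨hjv, key.1, key.2⟩
  · -- cardinality
    show (shiftUp Q.2).card = k
    rw [card_shiftUp, h7]

end Bwd


section Round

variable {m n : ℕ}

lemma left_inv (P : RPolyCarrier (m + n)) (h1 : IsRPolyo m n (RRl P) (RGl P))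
    (h3 : ∀ j ∈ P.2, 1 ≤ j.val) : bwdC (fwdC P) = P := by
  obtain ⟨hok, hlen, hodd, heven, hbuild, hsplit⟩ := rp_facts (RRl P) (RGl P) h1
  have hw : wOf (fwdC P) = levels (interlace (RRl P) (RGl P)) 1 := by
    rw [← ofFn_getD (levels (interlace (RRl P) (RGl P)) 1) 0 hlen]
    show List.ofFn _ = List.ofFn _
    congr 1
    funext i
    show 2 * rval ((levels (interlace (RRl P) (RGl P)) 1).getD i.val 0) +
        (if (if (levels (interlace (RRl P) (RGl P)) 1).getD i.val 0 % 2 = 1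
          then (1 : ℕ) else 2) = 1 then 1 else 0) = _
    unfold rval
    by_cases h : (levels (interlace (RRl P) (RGl P)) 1).getD i.val 0 % 2 = 1
    · rw [if_pos h, if_pos rfl]
      omega
    · rw [if_neg h, if_neg (by omega : ¬ (2 : ℕ) = 1)]
      omega
  have hb : build (wOf (fwdC P)) 1 = interlace (RRl P) (RGl P) := by rw [hw, hbuild]
  have hf1 : (fun i : Fin (m + n) =>
      (splitRG (build (wOf (fwdC P)) 1)).1.getD i.val false) = P.1.1 := by
    funext i
    rw [hb, hsplit]
    show (RRl P).getD i.val false = _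
    rw [RRl, getD_ofFn _ _ _ i.isLt]
  have hf2 : (fun i : Fin (m + n) =>
      (splitRG (build (wOf (fwdC P)) 1)).2.getD i.val false) = P.1.2 := by
    funext i
    rw [hb, hsplit]
    show (RGl P).getD i.val false = _
    rw [RGl, getD_ofFn _ _ _ i.isLt]
  have hD : shiftUp (shiftDown P.2) = P.2 := shiftUp_shiftDown _ h3
  show ((_, _), shiftUp (shiftDown P.2)) = P
  rw [hf1, hf2, hD]

lemma right_inv (Q : PFCarrier (m + n)) (h1 : IsParkingData (PFa Q) (PFb Q))
    (h2 : ∀ i : Fin (m + n), (Q.1 i).1 = 1 ∨ (Q.1 i).1 = 2) : fwdC (bwdC Q) = Q := by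
  obtain ⟨hlev, hlen, hok, hr', hg', hlr, hlg, hint, hword⟩ := bwd_facts Q h1 h2
  have hlev2 : levels (interlace (RRl (bwdC Q)) (RGl (bwdC Q))) 1 = wOf Q := by
    rw [hint, hlev]
  have hf : (fun i : Fin (m + n) =>
      ((if (levels (interlace (RRl (bwdC Q)) (RGl (bwdC Q))) 1).getD i.val 0 % 2 = 1
          then (1 : ℕ) else 2),
        rval ((levels (interlace (RRl (bwdC Q)) (RGl (bwdC Q))) 1).getD i.val 0))) = Q.1 := by
    funext i
    rw [hlev2]
    have ha : (PFa Q).getD i.val 0 = (Q.1 i).1 := by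
      simp only [PFa]
      rw [getD_ofFn _ _ _ i.isLt]
    have hbq : (PFb Q).getD i.val 0 = (Q.1 i).2 := by
      simp only [PFb]
      rw [getD_ofFn _ _ _ i.isLt]
    rcases h2 i with h | h
    · have hv := (w_val_eq Q i.isLt).1 (by rw [ha, h])
      rw [hbq] at hv
      have : (wOf Q).getD i.val 0 % 2 = 1 := by omega
      rw [if_pos this]
      have : rval ((wOf Q).getD i.val 0) = (Q.1 i).2 := by unfold rval; omega
      rw [this, ← h]
    · have hv := (w_val_eq Q i.isLt).2 (by rw [ha, h])
      rw [hbq] at hv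
      have : ¬ (wOf Q).getD i.val 0 % 2 = 1 := by omega
      rw [if_neg this]
      have : rval ((wOf Q).getD i.val 0) = (Q.1 i).2 := by unfold rval; omega
      rw [this, ← h]
  have hD : shiftDown (shiftUp Q.2) = Q.2 := shiftDown_shiftUp _
  show (_, shiftDown (shiftUp Q.2)) = Q
  rw [hD, hf]

end Round


section Stats

variable {m n : ℕ} (P : RPolyCarrier (m + n))

lemma fwd_dinv (h1 : IsRPolyo m n (RRl P) (RGl P)) :
    dinvPF (PFa (fwdC P)) (PFb (fwdC P)) = dinvR (RRl P) (RGl P) := by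
  obtain ⟨hok, hlen, hodd, heven, hbuild, hsplit⟩ := rp_facts (RRl P) (RGl P) h1
  set lev := levels (interlace (RRl P) (RGl P)) 1 with hlevdef
  have hWlen : (areaWordR (RRl P) (RGl P)).length = m + n + 1 := by
    show (0 :: lev).length = _
    rw [List.length_cons, hlen]
  have hW0 : (areaWordR (RRl P) (RGl P)).getD 0 0 = 0 := rfl
  have hWs : ∀ i : ℕ, (areaWordR (RRl P) (RGl P)).getD (i + 1) 0 = lev.getD i 0 :=
    fun i => rfl
  have hcond : ∀ p q : ℕ, p < m + n → q < m + n →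
      ((((PFb (fwdC P)).getD p 0 = (PFb (fwdC P)).getD q 0 ∧
         (PFa (fwdC P)).getD p 0 < (PFa (fwdC P)).getD q 0) ∨
        ((PFb (fwdC P)).getD p 0 = (PFb (fwdC P)).getD q 0 + 1 ∧
         (PFa (fwdC P)).getD q 0 < (PFa (fwdC P)).getD p 0)) ↔
       lev.getD p 0 = lev.getD q 0 + 1) := by
    intro p q hp hq
    rw [fwd_a_getD P hp, fwd_a_getD P hq, fwd_b_getD P hp, fwd_b_getD P hq, ← hlevdef]
    unfold rval
    constructor
    · intro h
      rcases h with ⟨e1, e2⟩ | ⟨e1, e2⟩ <;> split_ifs at e2 <;> omega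
    · intro h
      by_cases hq2 : lev.getD q 0 % 2 = 1
      · right
        refine ⟨by omega, ?_⟩
        rw [if_pos hq2, if_neg (show ¬ lev.getD p 0 % 2 = 1 by omega)]
        omega
      · left
        refine ⟨by omega, ?_⟩
        rw [if_neg hq2, if_pos (show lev.getD p 0 % 2 = 1 by omega)]
        omega
  rw [dinvPF, dinvR, hWlen, fwd_b_length]
  apply Finset.card_nbij' (fun p => (p.1 + 1, p.2 + 1)) (fun p => (p.1 - 1, p.2 - 1))
  · intro a ha
    simp only [Finset.mem_coe, Finset.mem_filter, Finset.mem_product, Finset.mem_range] at ha ⊢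
    obtain ⟨⟨hp1, hp2⟩, hlt, hc⟩ := ha
    refine ⟨⟨by omega, by omega⟩, by omega, ?_⟩
    rw [hWs, hWs]
    exact (hcond a.1 a.2 hp1 hp2).mp hc
  · intro b hb
    simp only [Finset.mem_coe, Finset.mem_filter, Finset.mem_product, Finset.mem_range] at hb ⊢
    obtain ⟨⟨hp1, hp2⟩, hlt, hc⟩ := hb
    have hb1 : 1 ≤ b.1 := by
      by_contra hb0
      have : b.1 = 0 := by omega
      rw [this, hW0] at hc
      omega
    obtain ⟨p1, e1⟩ : ∃ p1, b.1 = p1 + 1 := ⟨b.1 - 1, by omega⟩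
    obtain ⟨p2, e2⟩ : ∃ p2, b.2 = p2 + 1 := ⟨b.2 - 1, by omega⟩
    rw [e1, e2, hWs, hWs] at hc
    refine ⟨⟨by omega, by omega⟩, by omega, ?_⟩
    have f1 : b.1 - 1 = p1 := by omega
    have f2 : b.2 - 1 = p2 := by omega
    rw [f1, f2]
    exact (hcond p1 p2 (by omega) (by omega)).mpr hc
  · intro a ha
    simp only [Nat.add_sub_cancel]
  · intro b hb
    simp only [Finset.mem_coe, Finset.mem_filter, Finset.mem_product, Finset.mem_range] at hb
    obtain ⟨⟨hp1, hp2⟩, hlt, hc⟩ := hb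
    have hb1 : 1 ≤ b.1 := by
      by_contra hb0
      have : b.1 = 0 := by omega
      rw [this, hW0] at hc
      omega
    have : (b.1 - 1 + 1, b.2 - 1 + 1) = b := by
      have : b.1 - 1 + 1 = b.1 := by omega
      rw [this]
      have : b.2 - 1 + 1 = b.2 := by omega
      rw [this]
    exact this

lemma fwd_uarea (h1 : IsRPolyo m n (RRl P) (RGl P))
    (h3 : ∀ j ∈ P.2, 1 ≤ j.val) :
    uareaPF (PFb (fwdC P)) (PFD (fwdC P)) = uareaR (RRl P) (RGl P) (RDn P) := by
  obtain ⟨hok, hlen, hodd, heven, hbuild, hsplit⟩ := rp_facts (RRl P) (RGl P) h1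
  set lev := levels (interlace (RRl P) (RGl P)) 1 with hlevdef
  have hWlen : (areaWordR (RRl P) (RGl P)).length = m + n + 1 := by
    show (0 :: lev).length = _
    rw [List.length_cons, hlen]
  have hWs : ∀ i : ℕ, (areaWordR (RRl P) (RGl P)).getD (i + 1) 0 = lev.getD i 0 :=
    fun i => rfl
  have hmemR : ∀ x : ℕ, x ∈ RDn P ↔ ∃ h : x < m + n + 1, (⟨x, h⟩ : Fin (m + n + 1)) ∈ P.2 := by
    intro x
    rw [RDn, Finset.mem_image]
    constructor
    · rintro ⟨j, hj, rfl⟩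
      exact ⟨j.isLt, by simpa using hj⟩
    · rintro ⟨h, hm⟩
      exact ⟨⟨x, h⟩, hm, rfl⟩
  have hmemP : ∀ x : ℕ, x ∈ PFD (fwdC P) ↔
      ∃ h : x < m + n, (⟨x + 1, Nat.succ_lt_succ h⟩ : Fin (m + n + 1)) ∈ P.2 := by
    intro x
    rw [PFD, Finset.mem_image]
    constructor
    · rintro ⟨j, hj, rfl⟩
      have hj2 : j ∈ shiftDown P.2 := hj
      rw [mem_shiftDown] at hj2
      exact ⟨j.isLt, hj2⟩
    · rintro ⟨h, hm⟩
      exact ⟨⟨x, h⟩, mem_shiftDown.mpr hm, rfl⟩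
  have hnotR0 : (0 : ℕ) ∉ RDn P := by
    rw [hmemR]
    rintro ⟨h, hm⟩
    have := h3 _ hm
    simp at this
  have key : ∀ x : ℕ, x < m + n → (x ∈ PFD (fwdC P) ↔ (x + 1) ∈ RDn P) := by
    intro x hx
    rw [hmemP, hmemR]
    constructor
    · rintro ⟨h, hm⟩
      exact ⟨by omega, hm⟩
    · rintro ⟨h, hm⟩
      exact ⟨hx, hm⟩
  rw [uareaPF, uareaR, hWlen, fwd_b_length]
  have h0mem : (0 : ℕ) ∈ Finset.range (m + n + 1) \ RDn P := by
    rw [Finset.mem_sdiff, Finset.mem_range]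
    exact ⟨by omega, hnotR0⟩
  rw [← Finset.add_sum_erase _ _ h0mem]
  have hW0 : rval ((areaWordR (RRl P) (RGl P)).getD 0 0) = 0 := by
    rw [areaWordR, List.getD_cons_zero]; rfl
  rw [hW0, Nat.zero_add]
  apply Finset.sum_nbij' (fun x => x + 1) (fun x => x - 1)
  · intro x hx
    rw [Finset.mem_sdiff, Finset.mem_range] at hx
    rw [Finset.mem_erase, Finset.mem_sdiff, Finset.mem_range]
    refine ⟨by omega, by omega, ?_⟩
    intro hmem
    exact hx.2 ((key x hx.1).mpr hmem)
  · intro y hy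
    rw [Finset.mem_erase, Finset.mem_sdiff, Finset.mem_range] at hy
    obtain ⟨hy0, hylt, hynot⟩ := hy
    rw [Finset.mem_sdiff, Finset.mem_range]
    refine ⟨by omega, ?_⟩
    intro hmem
    have := (key (y - 1) (by omega)).mp hmem
    have e : y - 1 + 1 = y := by omega
    rw [e] at this
    exact hynot this
  · intro x hx
    simp
  · intro y hy
    rw [Finset.mem_erase] at hy
    have : y ≠ 0 := hy.1
    omega
  · intro x hx
    rw [hWs]
    rw [fwd_b_getD P (by
      rw [Finset.mem_sdiff, Finset.mem_range] at hx
      exact hx.1), ← hlevdef]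

end Stats

end PsiAux

/-- The bijection `ψ` between decorated reduced `m × n` parallelogram polyominoes (with `r`
zeros in the area word and `k` decorated rises) and decorated two-cars parking functions
(with `n` ones, `m` twos, `r-1` twos on the main diagonal and `k` decorated rises),
preserving both `dinv` and `underlined area`. -/
theorem psi_bijection (m n k r : ℕ) (hr : 1 ≤ r) (hrm : r ≤ m + 1) :
    ∃ e : RPStar m n r k ≃ PF2Star m n r k,
      ∀ P : RPStar m n r k,
        dinvPF (PFa (e P).val) (PFb (e P).val) = dinvR (RRl P.val) (RGl P.val) ∧
        uareaPF (PFb (e P).val) (PFD (e P).val) =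
          uareaR (RRl P.val) (RGl P.val) (RDn P.val) := by
  refine ⟨⟨fun P => ⟨PsiAux.fwdC P.val, ?_⟩, fun Q => ⟨PsiAux.bwdC Q.val, ?_⟩, ?_, ?_⟩, ?_⟩
  · obtain ⟨h1, h2, h3, h4⟩ := P.property
    exact PsiAux.fwd_mem P.val h1 h2 h3 h4
  · obtain ⟨h1, h2, h3, h4, h5, h6, h7⟩ := Q.property
    exact PsiAux.bwd_mem Q.val hr h1 h2 h3 h4 h5 h6 h7
  · intro P
    apply Subtype.ext
    obtain ⟨h1, h2, h3, h4⟩ := P.property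
    exact PsiAux.left_inv P.val h1 (fun j hj => (h3 j hj).1)
  · intro Q
    apply Subtype.ext
    obtain ⟨h1, h2, h3, h4, h5, h6, h7⟩ := Q.property
    exact PsiAux.right_inv Q.val h1 h2
  · intro P
    obtain ⟨h1, h2, h3, h4⟩ := P.property
    exact ⟨PsiAux.fwd_dinv P.val h1, PsiAux.fwd_uarea P.val h1 (fun j hj => (h3 j hj).1)⟩
end
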